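/- arXiv:1004.5440 — 5 statements merged into one kernel-verified Lean document; each statement's English description precedes it below -/
import Mathlib

section
/- Let p be a prime, μ ≥ 1, m = p^μ, n ≥ 3, and let A be a symmetric n×n matrix over Z/mZ such that A₁₁ is not a unit of Z/mZ and A₁₂ is a unit of Z/mZ. Then there exists a lower-triangular n×n matrix V over Z/mZ with every diagonal entry equal to 1 and with V₂₁ = 0, such that the matrix B = V·A·Vᵀ agrees with A in its top-left 2×2 block (Bᵢⱼ = Aᵢⱼ for i,j ∈ {1,2}) and satisfies Bᵢⱼ = 0 whenever exactly one of i, j lies in {1,2}; in particular B is symmetric and det B = det A = (A₁₁A₂₂ − A₁₂²) · det A'', where A'' is the lower-right (n-2)×(n-2) block of B. -/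
open Matrix

/-- Symmetric Gaussian elimination, 2×2 pivot case: if `A` is a symmetric `n × n`
matrix (`n ≥ 3`, here `n = n' + 3`) over `ZMod (p^μ)` with `A₁₁` not a unit and
`A₁₂` a unit (indices `0`, `1` in Lean), then there is a unit lower-triangular `V`
with `V₂₁ = 0` such that `B = V * A * Vᵀ` agrees with `A` on the top-left `2 × 2`
block, vanishes where exactly one index lies in the first two, and
`det A = (A₁₁A₂₂ − A₁₂²) · det A''` with `A''` the lower-right block. -/
theorem symmetric_elimination_two_by_two_pivot (p : ℕ) (hp : p.Prime) (μ : ℕ)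
    (hμ : 1 ≤ μ) (n : ℕ) (A : Matrix (Fin (n + 3)) (Fin (n + 3)) (ZMod (p ^ μ)))
    (hA : A.IsSymm) (hA11 : ¬ IsUnit (A 0 0)) (hA12 : IsUnit (A 0 1)) :
    ∃ V : Matrix (Fin (n + 3)) (Fin (n + 3)) (ZMod (p ^ μ)),
      (∀ i j : Fin (n + 3), i < j → V i j = 0) ∧
      (∀ i : Fin (n + 3), V i i = 1) ∧
      V 1 0 = 0 ∧
      (∀ i j : Fin (n + 3), i.val < 2 → j.val < 2 → (V * A * Vᵀ) i j = A i j) ∧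
      (∀ i j : Fin (n + 3), (i.val < 2 ∧ 2 ≤ j.val) ∨ (2 ≤ i.val ∧ j.val < 2) →
        (V * A * Vᵀ) i j = 0) ∧
      (V * A * Vᵀ).IsSymm ∧
      (V * A * Vᵀ).det = A.det ∧
      A.det = (A 0 0 * A 1 1 - A 0 1 ^ 2) *
        ((V * A * Vᵀ).submatrix (fun i : Fin (n + 1) => i.succ.succ) (fun i : Fin (n + 1) => i.succ.succ)).det := by
  haveI : Fact p.Prime := ⟨hp⟩
  haveI : NeZero (p ^ μ) := ⟨pow_ne_zero _ hp.pos.ne'⟩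
  -- unit criterion
  set f : ZMod (p ^ μ) →+* ZMod p := ZMod.castHom (dvd_pow_self p (by omega : μ ≠ 0)) (ZMod p) with hf
  have unit_iff : ∀ x : ZMod (p ^ μ), IsUnit x ↔ f x ≠ 0 := by
    intro x
    constructor
    · intro h h0
      obtain ⟨u, rfl⟩ := h
      exact (RingHom.isUnit_map _ (Units.isUnit u)).ne_zero h0
    · intro h
      have hx : ((x.val : ℕ) : ZMod (p ^ μ)) = x := ZMod.natCast_rightInverse x
      rw [← hx, ZMod.isUnit_iff_coprime]
      have hdvd : ¬ p ∣ x.val := by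
        intro hd
        apply h
        rw [hf, ZMod.castHom_apply, ZMod.cast_eq_val]
        exact (ZMod.natCast_eq_zero_iff _ _).mpr hd
      exact Nat.Coprime.pow_right _ (Nat.coprime_comm.mp (hp.coprime_iff_not_dvd.mpr hdvd))
  set a := A 0 0 with ha
  set b := A 0 1 with hb
  set c := A 1 1 with hc
  have hsym : ∀ i j, A j i = A i j := hA.apply
  set d : ZMod (p ^ μ) := a * c - b * b with hd_def
  have hd : IsUnit d := by
    rw [unit_iff]
    have hfa : f a = 0 := by
      by_contra h0
      exact hA11 ((unit_iff a).mpr h0)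
    have hfb : f b ≠ 0 := (unit_iff b).mp hA12
    rw [hd_def, map_sub, _root_.map_mul, _root_.map_mul, hfa, zero_mul, zero_sub, neg_ne_zero]
    exact mul_ne_zero hfb hfb
  set e0 : ZMod (p ^ μ) := Ring.inverse d with he0
  have hinv : d * e0 = 1 := Ring.mul_inverse_cancel d hd
  -- correction coefficients
  set n0 : Fin (n + 3) → ZMod (p ^ μ) := fun i => if 2 ≤ i.val then -((A i 0 * c - A i 1 * b) * e0) else 0 with hn0
  set n1 : Fin (n + 3) → ZMod (p ^ μ) := fun i => if 2 ≤ i.val then -((A i 1 * a - A i 0 * b) * e0) else 0 with hn1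
  have hn0lt : ∀ i : Fin (n + 3), i.val < 2 → n0 i = 0 := by
    intro i hi; simp [hn0, Nat.not_le.mpr hi]
  have hn1lt : ∀ i : Fin (n + 3), i.val < 2 → n1 i = 0 := by
    intro i hi; simp [hn1, Nat.not_le.mpr hi]
  have k0 : ∀ i : Fin (n + 3), 2 ≤ i.val → A i 0 + n0 i * a + n1 i * b = 0 := by
    intro i hi
    simp only [hn0, hn1, if_pos hi]
    linear_combination (-(A i 0)) * hinv
  have k1 : ∀ i : Fin (n + 3), 2 ≤ i.val → A i 1 + n0 i * b + n1 i * c = 0 := by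
    intro i hi
    simp only [hn0, hn1, if_pos hi]
    linear_combination (-(A i 1)) * hinv
  -- the matrix V
  set V : Matrix (Fin (n + 3)) (Fin (n + 3)) (ZMod (p ^ μ)) := Matrix.of fun i j =>
    (if i = j then (1 : ZMod (p ^ μ)) else 0) + (if j = 0 then n0 i else 0) + (if j = 1 then n1 i else 0) with hV
  have hVlow : ∀ i j : Fin (n + 3), i < j → V i j = 0 := by
    intro i j hij
    have h1 : i ≠ j := ne_of_lt hij
    have h2 : j ≠ 0 := by
      intro h; subst h; exact absurd hij (by simp [Fin.lt_def])
    simp only [hV, of_apply, if_neg h1, if_neg h2, zero_add]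
    split_ifs with h3
    · have : i.val < 1 := by rw [h3] at hij; simpa [Fin.lt_def] using hij
      exact hn1lt i (by omega)
    · rfl
  have hVdiag : ∀ i : Fin (n + 3), V i i = 1 := by
    intro i
    simp only [hV, of_apply, if_pos rfl]
    have e0' : (if i = 0 then n0 i else 0) = 0 := by
      split_ifs with h
      · exact hn0lt i (by rw [h]; simp)
      · rfl
    have e1' : (if i = 1 then n1 i else 0) = 0 := by
      split_ifs with h
      · exact hn1lt i (by rw [h]; simp)
      · rfl
    rw [e0', e1']; simp
  have hV10 : V 1 0 = 0 := by
    have h1 : (1 : Fin (n + 3)) ≠ 0 := by simp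
    simp only [hV, of_apply, if_neg h1, if_pos rfl]
    rw [hn0lt 1 (by simp)]
    simp
  -- product formulas
  have hVA : ∀ i j, (V * A) i j = A i j + n0 i * A 0 j + n1 i * A 1 j := by
    intro i j
    rw [Matrix.mul_apply]
    have : ∀ k : Fin (n + 3), V i k * A k j =
        (if i = k then A i j else 0) + (if k = 0 then n0 i * A 0 j else 0)
          + (if k = 1 then n1 i * A 1 j else 0) := by
      intro k
      simp only [hV, of_apply]
      split_ifs with h1 h2 h3 h2 h3 h3 h3 <;> subst_vars <;> try ring
      · exact absurd h3 (by simp)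
      · exact absurd h3 (by simp)
    rw [Finset.sum_congr rfl (fun k _ => this k)]
    simp [Finset.sum_add_distrib]
  have hBf : ∀ i j, (V * A * Vᵀ) i j =
      (V * A) i j + n0 j * (V * A) i 0 + n1 j * (V * A) i 1 := by
    intro i j
    rw [Matrix.mul_apply]
    have : ∀ k : Fin (n + 3), (V * A) i k * Vᵀ k j =
        (if j = k then (V * A) i j else 0) + (if k = 0 then n0 j * (V * A) i 0 else 0)
          + (if k = 1 then n1 j * (V * A) i 1 else 0) := by
      intro k
      simp only [transpose_apply, hV, of_apply]
      split_ifs with h1 h2 h3 h2 h3 h3 h3 <;> subst_vars <;> try ring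
      · exact absurd h3 (by simp)
      · exact absurd h3 (by simp)
    rw [Finset.sum_congr rfl (fun k _ => this k)]
    simp [Finset.sum_add_distrib]
  -- explicit entries
  have hB : ∀ i j, (V * A * Vᵀ) i j = A i j + n0 i * A 0 j + n1 i * A 1 j
      + n0 j * (A i 0 + n0 i * a + n1 i * b) + n1 j * (A i 1 + n0 i * b + n1 i * c) := by
    intro i j
    rw [hBf, hVA, hVA, hVA]
    rw [← ha, ← hc]
    have h10 : A 1 0 = b := hsym 0 1
    have h01 : A 0 1 = b := hb.symm
    rw [h10, h01]
    all_goals ring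
  -- top-left block preserved
  have htop : ∀ i j : Fin (n + 3), i.val < 2 → j.val < 2 → (V * A * Vᵀ) i j = A i j := by
    intro i j hi hj
    rw [hB, hn0lt i hi, hn1lt i hi, hn0lt j hj, hn1lt j hj]
    ring
  -- mixed entries vanish
  have hzero : ∀ i j : Fin (n + 3), (i.val < 2 ∧ 2 ≤ j.val) ∨ (2 ≤ i.val ∧ j.val < 2) →
      (V * A * Vᵀ) i j = 0 := by
    intro i j h
    rcases h with ⟨hi, hj⟩ | ⟨hi, hj⟩
    · have hi01 : i = 0 ∨ i = 1 := by
        have h' : i.val = 0 ∨ i.val = 1 := by omega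
        rcases h' with h' | h'
        · exact Or.inl (Fin.ext (by simp [h']))
        · exact Or.inr (Fin.ext (by simp [h']))
      rcases hi01 with rfl | rfl
      · rw [hB, hn0lt 0 (by simp), hn1lt 0 (by simp)]
        linear_combination k0 j hj + hsym j 0
      · rw [hB, hn0lt 1 (by simp), hn1lt 1 (by simp)]
        linear_combination k1 j hj + hsym j 1 + n0 j * hsym 0 1
    · have hj01 : j = 0 ∨ j = 1 := by
        have h' : j.val = 0 ∨ j.val = 1 := by omega
        rcases h' with h' | h'
        · exact Or.inl (Fin.ext (by simp [h']))
        · exact Or.inr (Fin.ext (by simp [h']))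
      rcases hj01 with rfl | rfl
      · rw [hB, hn0lt 0 (by simp), hn1lt 0 (by simp)]
        linear_combination k0 i hi + n1 i * hsym 0 1
      · rw [hB, hn0lt 1 (by simp), hn1lt 1 (by simp)]
        linear_combination k1 i hi
  -- symmetry of the result
  have hBsymm : (V * A * Vᵀ).IsSymm := by
    show (V * A * Vᵀ)ᵀ = V * A * Vᵀ
    rw [Matrix.transpose_mul, Matrix.transpose_mul, Matrix.transpose_transpose, hA.eq,
      ← Matrix.mul_assoc]
  -- determinant of V
  have hdetV : V.det = 1 := by
    have h1 : V.det = ∏ i, V i i := by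
      apply Matrix.det_of_lowerTriangular
      intro i j hij
      exact hVlow i j hij
    rw [h1]
    simp [hVdiag]
  have hdet : (V * A * Vᵀ).det = A.det := by
    rw [Matrix.det_mul, Matrix.det_mul, Matrix.det_transpose, hdetV]
    ring
  -- block structure
  set A'' := (V * A * Vᵀ).submatrix (fun i : Fin (n + 1) => i.succ.succ)
    (fun i : Fin (n + 1) => i.succ.succ) with hA''
  set D2 : Matrix (Fin 2) (Fin 2) (ZMod (p ^ μ)) := !![a, b; b, c] with hD2
  have heq2 : 2 + (n + 1) = n + 3 := by omega
  set e : Fin 2 ⊕ Fin (n + 1) ≃ Fin (n + 3) := finSumFinEquiv.trans (finCongr heq2) with he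
  have he_inl : ∀ k : Fin 2, (e (Sum.inl k)).val = k.val := by
    intro k
    simp [he]
  have he_inr : ∀ k : Fin (n + 1), e (Sum.inr k) = k.succ.succ := by
    intro k
    apply Fin.ext
    simp [he]
    all_goals omega
  have E0 : e (Sum.inl 0) = (0 : Fin (n + 3)) := Fin.ext (by rw [he_inl]; rfl)
  have E1 : e (Sum.inl 1) = (1 : Fin (n + 3)) := Fin.ext (by rw [he_inl]; rfl)
  have hblock : V * A * Vᵀ = (Matrix.reindex e e) (Matrix.fromBlocks D2 0 0 A'') := by
    ext i j
    obtain ⟨s, rfl⟩ := e.surjective i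
    obtain ⟨t, rfl⟩ := e.surjective j
    rw [Matrix.reindex_apply, Matrix.submatrix_apply, Equiv.symm_apply_apply,
      Equiv.symm_apply_apply]
    rcases s with k | k <;> rcases t with l | l
    · rw [Matrix.fromBlocks_apply₁₁]
      rw [htop _ _ (by rw [he_inl]; exact k.isLt) (by rw [he_inl]; exact l.isLt)]
      fin_cases k <;> fin_cases l <;>
        simp only [Fin.mk_zero, Fin.mk_one, E0, E1, hD2, Matrix.cons_val', Matrix.cons_val_zero, Matrix.cons_val_one,
          Matrix.head_cons, Matrix.empty_val', Matrix.cons_val_fin_one, Matrix.head_fin_const]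
      · exact ha.symm
      · exact hb.symm
      · rw [hsym 0 1]; exact hb.symm
      · exact hc.symm
    · rw [Matrix.fromBlocks_apply₁₂, Matrix.zero_apply]
      exact hzero _ _ (Or.inl ⟨by rw [he_inl]; exact k.isLt, by rw [he_inr]; simp⟩)
    · rw [Matrix.fromBlocks_apply₂₁, Matrix.zero_apply]
      exact hzero _ _ (Or.inr ⟨by rw [he_inr]; simp, by rw [he_inl]; exact l.isLt⟩)
    · rw [Matrix.fromBlocks_apply₂₂, he_inr, he_inr, hA'', Matrix.submatrix_apply]
  have hdetB : (V * A * Vᵀ).det = (a * c - b * b) * A''.det := by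
    rw [hblock, Matrix.det_reindex_self, Matrix.det_fromBlocks_zero₂₁, hD2,
      Matrix.det_fin_two_of]
  refine ⟨V, hVlow, hVdiag, hV10, htop, hzero, hBsymm, hdet, ?_⟩
  linear_combination hdetB - hdet
end

section
/- Let p be a prime, q = 1/p, and let n ≥ 2 be an integer. Then P(n, p) = (1−q)·P(n−1, p) + q(1−q^{n−1})·P(n−2, p). -/
open Matrix Sum

set_option linter.unusedSectionVars false

section
variable {F : Type*} [Field F] [DecidableEq F] {ι : Type*} [Fintype ι] [DecidableEq ι]

/-- assemble a symmetric matrix on `Unit ⊕ ι` from corner, vector, block -/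
def asm (a : F) (v : ι → F) (B : Matrix ι ι F) : Matrix (Unit ⊕ ι) (Unit ⊕ ι) F :=
  Matrix.fromBlocks (Matrix.of fun _ _ => a) (Matrix.of fun _ i => v i)
    (Matrix.of fun i _ => v i) B

@[simp] lemma asm_inl_inl (a : F) (v : ι → F) (B) (x y : Unit) : asm a v B (inl x) (inl y) = a := rfl
@[simp] lemma asm_inl_inr (a : F) (v : ι → F) (B) (x : Unit) (i : ι) : asm a v B (inl x) (inr i) = v i := rfl
@[simp] lemma asm_inr_inl (a : F) (v : ι → F) (B) (x : Unit) (i : ι) : asm a v B (inr i) (inl x) = v i := rfl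
@[simp] lemma asm_inr_inr (a : F) (v : ι → F) (B : Matrix ι ι F) (i j : ι) : asm a v B (inr i) (inr j) = B i j := rfl

lemma asm_isSymm_iff (a : F) (v : ι → F) (B : Matrix ι ι F) :
    (asm a v B).IsSymm ↔ B.IsSymm := by
  constructor
  · intro h
    ext i j
    exact Matrix.IsSymm.apply h (inr i) (inr j)
  · intro h
    ext x y
    cases x <;> cases y <;> simp [Matrix.IsSymm.apply h]

lemma asm_recover {A : Matrix (Unit ⊕ ι) (Unit ⊕ ι) F} (h : A.IsSymm) :
    asm (A (inl ()) (inl ())) (fun i => A (inr i) (inl ())) (A.submatrix inr inr) = A := by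
  ext x y
  cases x <;> cases y <;> simp [Matrix.IsSymm.apply h]

/-- decomposition equivalence, parametric in a predicate -/
def decEquiv (pr : Matrix (Unit ⊕ ι) (Unit ⊕ ι) F → Prop) :
    {A : Matrix (Unit ⊕ ι) (Unit ⊕ ι) F // A.IsSymm ∧ pr A} ≃
      Σ av : F × (ι → F), {B : Matrix ι ι F // B.IsSymm ∧ pr (asm av.1 av.2 B)} where
  toFun A := ⟨(A.1 (inl ()) (inl ()), fun i => A.1 (inr i) (inl ())),
    ⟨A.1.submatrix inr inr, A.2.1.submatrix _, by rw [asm_recover A.2.1]; exact A.2.2⟩⟩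
  invFun x := ⟨asm x.1.1 x.1.2 x.2.1, (asm_isSymm_iff _ _ _).2 x.2.2.1, x.2.2.2⟩
  left_inv A := Subtype.ext (asm_recover A.2.1)
  right_inv x := by
    obtain ⟨⟨a, v⟩, B, hB, hpr⟩ := x
    have h1 : (asm a v B).submatrix inr inr = B := by ext i j; simp
    simp only [asm_inl_inl, asm_inr_inl]
    congr 1 <;> try rw [h1]

lemma card_decomp [Fintype F] (pr : Matrix (Unit ⊕ ι) (Unit ⊕ ι) F → Prop) [DecidablePred pr] :
    Nat.card {A : Matrix (Unit ⊕ ι) (Unit ⊕ ι) F // A.IsSymm ∧ pr A} =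
      ∑ av : F × (ι → F), Nat.card {B : Matrix ι ι F // B.IsSymm ∧ pr (asm av.1 av.2 B)} := by
  rw [Nat.card_congr (decEquiv pr)]
  rw [Nat.card_eq_fintype_card]
  rw [Fintype.card_sigma]
  congr 1
  ext av
  rw [Nat.card_eq_fintype_card]

/-- translation bijection -/
lemma card_sub_shift (K : Matrix ι ι F) (hK : K.IsSymm) :
    Nat.card {B : Matrix ι ι F // B.IsSymm ∧ (B - K).det ≠ 0} =
      Nat.card {B : Matrix ι ι F // B.IsSymm ∧ B.det ≠ 0} := by
  apply Nat.card_congr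
  refine Equiv.subtypeEquiv (Equiv.subRight K) fun B => ?_
  simp only [Equiv.subRight_apply]
  constructor
  · rintro ⟨h1, h2⟩
    exact ⟨h1.sub hK, h2⟩
  · rintro ⟨h1, h2⟩
    refine ⟨?_, h2⟩
    have := h1.add hK
    simpa using this

lemma isSymm_reindex_iff {κ : Type*} (e : ι ≃ κ) (A : Matrix ι ι F) :
    (Matrix.reindex e e A).IsSymm ↔ A.IsSymm := by
  constructor
  · intro h
    ext i j
    simpa using Matrix.IsSymm.apply h (e i) (e j)
  · intro h
    ext i j
    simpa using Matrix.IsSymm.apply h (e.symm i) (e.symm j)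

/-- an equiv Fin 2 ≃ Unit ⊕ Unit -/
def e2 : Fin 2 ≃ Unit ⊕ Unit where
  toFun := ![inl (), inr ()]
  invFun := Sum.elim (fun _ => 0) (fun _ => 1)
  left_inv := by decide
  right_inv := by rintro (⟨⟩ | ⟨⟩) <;> rfl

lemma det_two (M : Matrix (Unit ⊕ Unit) (Unit ⊕ Unit) F) :
    M.det = M (inl ()) (inl ()) * M (inr ()) (inr ()) -
      M (inl ()) (inr ()) * M (inr ()) (inl ()) := by
  rw [← Matrix.det_submatrix_equiv_self e2 M, Matrix.det_fin_two]
  rfl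

/-- reindex invariance -/
lemma card_S_congr {κ : Type*} [Fintype κ] [DecidableEq κ] (e : ι ≃ κ) :
    Nat.card {A : Matrix ι ι F // A.IsSymm ∧ A.det ≠ 0} =
      Nat.card {A : Matrix κ κ F // A.IsSymm ∧ A.det ≠ 0} := by
  apply Nat.card_congr
  refine Equiv.subtypeEquiv (Matrix.reindex e e) fun A => ?_
  have hs : (Matrix.reindex e e A).IsSymm ↔ A.IsSymm := by
    constructor
    · intro h
      ext i j
      simpa using Matrix.IsSymm.apply h (e i) (e j)
    · intro h
      ext i j
      simpa using Matrix.IsSymm.apply h (e.symm i) (e.symm j)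
  have hd : (Matrix.reindex e e A).det = A.det := by
    simp [Matrix.reindex, Matrix.det_submatrix_equiv_self]
  rw [hs, hd]

/-- the 1×1 corner matrix -/
lemma det_corner (a : F) : (Matrix.of fun _ _ : Unit => a).det = a := by
  rw [Matrix.det_unique]; rfl

/-- Pivot case: corner entry nonzero -/
lemma card_pivot (a : F) (ha : a ≠ 0) (v : ι → F) :
    Nat.card {B : Matrix ι ι F // B.IsSymm ∧ (asm a v B).det ≠ 0} =
      Nat.card {B : Matrix ι ι F // B.IsSymm ∧ B.det ≠ 0} := by
  have hinv : Invertible (Matrix.of fun _ _ : Unit => a) :=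
    Matrix.invertibleOfIsUnitDet _ (by rw [det_corner]; exact ha.isUnit)
  set K : Matrix ι ι F :=
    (Matrix.of fun (i : ι) (_ : Unit) => v i) * ⅟(Matrix.of fun _ _ : Unit => a) *
      (Matrix.of fun (_ : Unit) (i : ι) => v i) with hKdef
  have hKentry : ∀ i j, K i j = v i * (⅟(Matrix.of fun _ _ : Unit => a) () ()) * v j := by
    intro i j
    simp [hKdef, Matrix.mul_apply]
  have hKsymm : K.IsSymm := by
    ext i j
    rw [Matrix.transpose_apply, hKentry, hKentry]
    ring
  have hdet : ∀ B : Matrix ι ι F, (asm a v B).det = a * (B - K).det := by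
    intro B
    rw [show asm a v B = Matrix.fromBlocks (Matrix.of fun _ _ : Unit => a)
      (Matrix.of fun (_ : Unit) (i : ι) => v i) (Matrix.of fun (i : ι) (_ : Unit) => v i) B from rfl]
    rw [Matrix.det_fromBlocks₁₁, det_corner]
  have : ∀ B : Matrix ι ι F, ((asm a v B).det ≠ 0) ↔ ((B - K).det ≠ 0) := by
    intro B
    rw [hdet B]
    simp [ha]
  calc Nat.card {B : Matrix ι ι F // B.IsSymm ∧ (asm a v B).det ≠ 0}
      = Nat.card {B : Matrix ι ι F // B.IsSymm ∧ (B - K).det ≠ 0} := by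
        apply Nat.card_congr
        exact Equiv.subtypeEquiv (Equiv.refl _) fun B => by simp [this B]
    _ = Nat.card {B : Matrix ι ι F // B.IsSymm ∧ B.det ≠ 0} := card_sub_shift K hKsymm

lemma det_asm_zero_zero (B : Matrix ι ι F) : (asm (0 : F) 0 B).det = 0 := by
  apply Matrix.det_eq_zero_of_row_eq_zero (inl ())
  rintro (x | i) <;> simp

section ZeroCase
variable [Fintype F]

lemma card_zero_v (v : ι → F) (hv : v ≠ 0) (κ : Type*) [Fintype κ] [DecidableEq κ]
    (hκ : Fintype.card κ + 1 = Fintype.card ι) :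
    Nat.card {B : Matrix ι ι F // B.IsSymm ∧ (asm 0 v B).det ≠ 0} =
      Fintype.card F ^ Fintype.card ι *
        Nat.card {C : Matrix κ κ F // C.IsSymm ∧ C.det ≠ 0} := by
  obtain ⟨j, hj⟩ : ∃ j, v j ≠ 0 := by
    by_contra h
    push_neg at h
    exact hv (funext h)
  classical
  set ι' := {i : ι // ¬ i = j} with hι'
  let e : Unit ⊕ ι' ≃ ι :=
    (Equiv.sumCongr (Equiv.ofUnique Unit {i : ι // i = j}) (Equiv.refl ι')).trans
      (Equiv.sumCompl (· = j))
  have hej : e (inl ()) = j := by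
    rw [show e (inl ()) = ((Equiv.ofUnique Unit {i : ι // i = j}) ()).val from rfl]
    exact ((Equiv.ofUnique Unit {i : ι // i = j}) ()).prop
  set w : Unit ⊕ ι' → F := v ∘ e with hw
  have hwc : w (inl ()) = v j := by simp [hw, hej]
  -- step 1 : transport along e
  have step1 : Nat.card {B : Matrix ι ι F // B.IsSymm ∧ (asm 0 v B).det ≠ 0} =
      Nat.card {C : Matrix (Unit ⊕ ι') (Unit ⊕ ι') F // C.IsSymm ∧ (asm 0 w C).det ≠ 0} := by
    apply Nat.card_congr
    refine (Equiv.subtypeEquiv (Matrix.reindex e e).symm fun B => ?_)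
    rw [Matrix.reindex_symm]
    rw [_root_.isSymm_reindex_iff]
    have hdet : (asm 0 w (Matrix.reindex e.symm e.symm B)).det = (asm 0 v B).det := by
      have heq : asm 0 w (Matrix.reindex e.symm e.symm B) =
          (asm 0 v B).submatrix (⇑((Equiv.refl Unit).sumCongr e)) (⇑((Equiv.refl Unit).sumCongr e)) := by
        ext x y
        cases x <;> cases y <;> simp [hw]
      rw [heq, Matrix.det_submatrix_equiv_self]
    rw [hdet]
  rw [step1]
  have step2 := card_decomp (ι := ι') (pr := fun C => (asm 0 w C).det ≠ 0)
  rw [step2]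
  -- per-pair count
  have step3 : ∀ bu : F × (ι' → F),
      Nat.card {D : Matrix ι' ι' F // D.IsSymm ∧ (asm 0 w (asm bu.1 bu.2 D)).det ≠ 0} =
        Nat.card {D : Matrix ι' ι' F // D.IsSymm ∧ D.det ≠ 0} := by
    rintro ⟨b, u⟩
    set σ := Equiv.sumAssoc Unit Unit ι' with hσ
    set H : Matrix (Unit ⊕ Unit) (Unit ⊕ Unit) F :=
      Matrix.of fun x y => Sum.elim (fun _ => Sum.elim (fun _ => 0) (fun _ => w (inl ())) y)
        (fun _ => Sum.elim (fun _ => w (inl ())) (fun _ => b) y) x with hH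
    set P : Matrix (Unit ⊕ Unit) ι' F :=
      Matrix.of fun x i => Sum.elim (fun _ => w (inr i)) (fun _ => u i) x with hP
    set Q : Matrix ι' (Unit ⊕ Unit) F :=
      Matrix.of fun i x => Sum.elim (fun _ => w (inr i)) (fun _ => u i) x with hQ
    have hblock : ∀ D : Matrix ι' ι' F,
        (asm 0 w (asm b u D)).submatrix σ σ = Matrix.fromBlocks H P Q D := by
      intro D
      ext x y
      rcases x with (x | x) | i <;> rcases y with (y | y) | k <;> simp [hσ, hH, hP, hQ]
    have hc : w (inl ()) ≠ 0 := by rw [hwc]; exact hj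
    have hdetH : H.det = -(w (inl ()) * w (inl ())) := by
      rw [det_two]; simp [hH]
    have hdetHne : H.det ≠ 0 := by
      rw [hdetH]
      exact neg_ne_zero.mpr (mul_ne_zero hc hc)
    have hinv : Invertible H := Matrix.invertibleOfIsUnitDet _ hdetHne.isUnit
    have hdet : ∀ D : Matrix ι' ι' F,
        (asm 0 w (asm b u D)).det = H.det * (D - Q * ⅟H * P).det := by
      intro D
      rw [← Matrix.det_submatrix_equiv_self σ, hblock, Matrix.det_fromBlocks₁₁]
    set K : Matrix ι' ι' F := Q * ⅟H * P with hKdef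
    have hHsymm : Hᵀ = H := by
      ext x y
      rcases x with x | x <;> rcases y with y | y <;> simp [hH]
    have hPQ : Pᵀ = Q := by ext i x; rcases x with x | x <;> simp [hP, hQ]
    have hQP : Qᵀ = P := by ext x i; rcases x with x | x <;> simp [hP, hQ]
    have hinvofH : (⅟H)ᵀ = ⅟H := by
      rw [Matrix.invOf_eq_nonsing_inv, Matrix.transpose_nonsing_inv, hHsymm]
    have hKsymm : K.IsSymm := by
      show Kᵀ = K
      rw [hKdef, Matrix.transpose_mul, Matrix.transpose_mul, hPQ, hinvofH, hQP,
        Matrix.mul_assoc]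
    have hiff : ∀ D : Matrix ι' ι' F,
        ((asm 0 w (asm b u D)).det ≠ 0) ↔ ((D - K).det ≠ 0) := by
      intro D
      rw [hdet D]
      simp [hdetHne]
    calc Nat.card {D : Matrix ι' ι' F // D.IsSymm ∧ (asm 0 w (asm b u D)).det ≠ 0}
        = Nat.card {D : Matrix ι' ι' F // D.IsSymm ∧ (D - K).det ≠ 0} := by
          apply Nat.card_congr
          exact Equiv.subtypeEquiv (Equiv.refl _) fun D => by simp [hiff D]
      _ = Nat.card {D : Matrix ι' ι' F // D.IsSymm ∧ D.det ≠ 0} := card_sub_shift K hKsymm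
  have hcards : Fintype.card ι' = Fintype.card κ := by
    have h1 : Fintype.card ι' = Fintype.card ι - 1 := by
      show Fintype.card {i : ι // ¬ i = j} = Fintype.card ι - 1
      have := Fintype.card_subtype_compl (fun i : ι => i = j)
      simpa [Fintype.card_subtype_eq] using this
    omega
  have hNeq : Nat.card {D : Matrix ι' ι' F // D.IsSymm ∧ D.det ≠ 0} =
      Nat.card {C : Matrix κ κ F // C.IsSymm ∧ C.det ≠ 0} :=
    card_S_congr (Fintype.equivOfCardEq hcards)
  simp only [step3, hNeq, Finset.sum_const, Finset.card_univ, smul_eq_mul]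
  congr 1
  rw [Fintype.card_prod, Fintype.card_fun]
  rw [← pow_succ']
  congr 1
  omega

end ZeroCase
end

/-- Number of symmetric `n × n` matrices over `ZMod m` with nonzero determinant. -/
noncomputable def Nsym (n m : ℕ) : ℕ :=
  Nat.card {A : Matrix (Fin n) (Fin n) (ZMod m) // A.IsSymm ∧ A.det ≠ 0}

lemma Nsym_rec (p : ℕ) (hp : p.Prime) (k : ℕ) :
    Nsym (k + 2) p =
      (p - 1) * (p ^ (k + 1) * Nsym (k + 1) p) +
        (p ^ (k + 1) - 1) * (p ^ (k + 1) * Nsym k p) := by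
  haveI : Fact p.Prime := ⟨hp⟩
  set F := ZMod p with hF
  set ι := Fin (k + 1) with hι
  have hcardF : Fintype.card F = p := ZMod.card p
  have e : Fin (k + 2) ≃ Unit ⊕ ι := Fintype.equivOfCardEq (by simp [hι]; omega)
  have h0 : Nsym (k + 2) p =
      Nat.card {A : Matrix (Unit ⊕ ι) (Unit ⊕ ι) F // A.IsSymm ∧ A.det ≠ 0} :=
    card_S_congr e
  rw [h0, card_decomp (pr := fun A : Matrix (Unit ⊕ ι) (Unit ⊕ ι) F => A.det ≠ 0)]
  rw [Fintype.sum_prod_type]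
  have hNsym1 : Nat.card {B : Matrix ι ι F // B.IsSymm ∧ B.det ≠ 0} = Nsym (k + 1) p := rfl
  have hNsymk : Nat.card {C : Matrix (Fin k) (Fin k) F // C.IsSymm ∧ C.det ≠ 0} = Nsym k p := rfl
  -- inner sums
  have hpivot : ∀ a : F, a ≠ 0 →
      (∑ v : ι → F, Nat.card {B : Matrix ι ι F // B.IsSymm ∧ (asm a v B).det ≠ 0}) =
        p ^ (k + 1) * Nsym (k + 1) p := by
    intro a ha
    rw [Finset.sum_congr rfl (fun v _ => card_pivot a ha v)]
    rw [Finset.sum_const, Finset.card_univ, Fintype.card_fun, hcardF, hNsym1, smul_eq_mul]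
    simp [hι]
  have hzero :
      (∑ v : ι → F, Nat.card {B : Matrix ι ι F // B.IsSymm ∧ (asm 0 v B).det ≠ 0}) =
        (p ^ (k + 1) - 1) * (p ^ (k + 1) * Nsym k p) := by
    rw [← Finset.add_sum_erase Finset.univ _ (Finset.mem_univ (0 : ι → F))]
    have h00 : Nat.card {B : Matrix ι ι F // B.IsSymm ∧ (asm (0:F) 0 B).det ≠ 0} = 0 := by
      have : IsEmpty {B : Matrix ι ι F // B.IsSymm ∧ (asm (0:F) 0 B).det ≠ 0} := by
        constructor
        rintro ⟨B, _, hd⟩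
        exact hd (det_asm_zero_zero B)
      exact Nat.card_of_isEmpty
    rw [h00, zero_add]
    have hconst : ∀ v ∈ Finset.univ.erase (0 : ι → F),
        Nat.card {B : Matrix ι ι F // B.IsSymm ∧ (asm 0 v B).det ≠ 0} =
          p ^ (k + 1) * Nsym k p := by
      intro v hv
      have hv0 : v ≠ 0 := Finset.ne_of_mem_erase hv
      rw [card_zero_v v hv0 (Fin k) (by simp [hι])]
      rw [hNsymk, hcardF]
      simp [hι]
    rw [Finset.sum_congr rfl hconst, Finset.sum_const, smul_eq_mul]
    congr 1
    rw [Finset.card_erase_of_mem (Finset.mem_univ _), Finset.card_univ, Fintype.card_fun,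
      hcardF]
    simp [hι]
  rw [← Finset.add_sum_erase Finset.univ _ (Finset.mem_univ (0 : F))]
  rw [hzero]
  have hrest : ∀ a ∈ Finset.univ.erase (0 : F),
      (∑ v : ι → F, Nat.card {B : Matrix ι ι F // B.IsSymm ∧ (asm a v B).det ≠ 0}) =
        p ^ (k + 1) * Nsym (k + 1) p := fun a ha => hpivot a (Finset.ne_of_mem_erase ha)
  rw [Finset.sum_congr rfl hrest, Finset.sum_const, smul_eq_mul,
    Finset.card_erase_of_mem (Finset.mem_univ _), Finset.card_univ, hcardF]
  ring

/-- Proportion of symmetric `n × n` matrices over `ZMod m` with nonzero determinant. -/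
noncomputable def Psym (n m : ℕ) : ℝ :=
  (Nsym n m : ℝ) / (m : ℝ) ^ (n * (n + 1) / 2)

theorem Psym_three_term_recurrence_prime (p : ℕ) (hp : p.Prime) (q : ℝ)
    (hq : q = 1 / p) (n : ℕ) (hn : 2 ≤ n) :
    Psym n p = (1 - q) * Psym (n - 1) p + q * (1 - q ^ (n - 1)) * Psym (n - 2) p := by
  obtain ⟨k, rfl⟩ : ∃ k, n = k + 2 := ⟨n - 2, by omega⟩
  have h1 : k + 2 - 1 = k + 1 := rfl
  have h2 : k + 2 - 2 = k := rfl
  rw [h1, h2]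
  have hp0 : (0:ℝ) < (p:ℝ) := by exact_mod_cast hp.pos
  have hpne : (p:ℝ) ≠ 0 := ne_of_gt hp0
  have hT2 : (k+2)*(k+2+1)/2 = (k+1)*(k+1+1)/2 + (k+2) := by
    have h : (k+2)*(k+3) = (k+1)*(k+2) + 2*(k+2) := by ring
    rw [show k+2+1 = k+3 from rfl, h, show k+1+1 = k+2 from rfl,
      Nat.add_mul_div_left _ _ (by norm_num : 0 < 2)]
  have hT1 : (k+1)*(k+1+1)/2 = k*(k+1)/2 + (k+1) := by
    have h : (k+1)*(k+2) = k*(k+1) + 2*(k+1) := by ring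
    rw [show k+1+1 = k+2 from rfl, h, Nat.add_mul_div_left _ _ (by norm_num : 0 < 2)]
  simp only [Psym]
  rw [Nsym_rec p hp k, hT2, hT1]
  have c1 : ((p - 1 : ℕ) : ℝ) = (p:ℝ) - 1 := by
    have := hp.one_lt.le
    push_cast [Nat.cast_sub this]
    ring
  have c2 : ((p^(k+1) - 1 : ℕ) : ℝ) = (p:ℝ)^(k+1) - 1 := by
    have h1p : 1 ≤ p^(k+1) := Nat.one_le_pow _ _ hp.pos
    push_cast [Nat.cast_sub h1p]
    ring
  push_cast [c1, c2]
  rw [hq, div_pow, one_pow]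
  set T := k*(k+1)/2 with hT
  field_simp
  ring
end

section
/- Let p be a prime, q = 1/p, and let n ≥ 3 be an odd integer. Then P(n, p) = (1 − q^n)·P(n−2, p). -/
open Matrix
set_option linter.unusedSectionVars false
set_option linter.unusedTactic false
set_option maxHeartbeats 1600000
variable {K : Type*} [Field K] [Fintype K] [DecidableEq K]



/-- The type of symmetric invertible matrices over index type ι. -/
abbrev SI (K : Type*) [Field K] (ι : Type*) [Fintype ι] [DecidableEq ι] :=
  {A : Matrix ι ι K // A.IsSymm ∧ A.det ≠ 0}

section basic
variable {ι κ : Type*} [Fintype ι] [DecidableEq ι] [Fintype κ] [DecidableEq κ]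

lemma card_SI_congr (e : ι ≃ κ) : Nat.card (SI K ι) = Nat.card (SI K κ) := by
  refine Nat.card_congr ((Matrix.reindex e e).subtypeEquiv fun A => ?_)
  rw [reindex_apply]
  constructor
  · rintro ⟨h1, h2⟩
    refine ⟨h1.submatrix _, by rwa [det_submatrix_equiv_self]⟩
  · rintro ⟨h1, h2⟩
    have h1' : A.IsSymm := by
      have := h1.submatrix e
      simpa [submatrix_submatrix] using this
    exact ⟨h1', by rwa [det_submatrix_equiv_self] at h2⟩

lemma nat_card_sigma {α : Type*} [Fintype α] (f : α → Type*) [∀ a, Finite (f a)] :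
    Nat.card (Sigma f) = ∑ a, Nat.card (f a) := by
  have : ∀ a, Fintype (f a) := fun a => Fintype.ofFinite _
  simp [Nat.card_eq_fintype_card, Fintype.card_sigma]

lemma card_subtype_fiberwise {α β : Type*} [Finite α] [Fintype β] (P : α → Prop) (f : α → β) :
    Nat.card {a : α // P a} = ∑ v : β, Nat.card {a : α // P a ∧ f a = v} := by
  rw [← nat_card_sigma (fun v => {a : α // P a ∧ f a = v})]
  refine Nat.card_congr ?_
  exact (Equiv.sigmaFiberEquiv (fun x : {a // P a} => f x.1)).symm.trans
    (Equiv.sigmaCongrRight fun v =>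
      ((Equiv.subtypeSubtypeEquivSubtypeInter P (fun a => f a = v))))

end basic




section block
variable {ι κ : Type*} [Fintype ι] [DecidableEq ι] [Fintype κ] [DecidableEq κ]

lemma isSymm_BHB (H : Matrix ι ι K) (hH : H.IsSymm) (B : Matrix κ ι K) :
    (B * H⁻¹ * Bᵀ).IsSymm := by
  unfold Matrix.IsSymm
  rw [transpose_mul, transpose_mul, transpose_transpose, transpose_nonsing_inv, hH.eq,
    Matrix.mul_assoc]


lemma toBlocks₁₂_of_isSymm {A : Matrix (ι ⊕ κ) (ι ⊕ κ) K} (hs : A.IsSymm) :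
    A.toBlocks₁₂ = A.toBlocks₂₁ᵀ := by
  ext i j
  simp only [toBlocks₁₂, toBlocks₂₁, of_apply, transpose_apply]
  exact hs.apply (Sum.inr j) (Sum.inl i)

/-- Core counting lemma: symmetric invertible matrices with fixed invertible symmetric
upper-left block `H` and fixed lower-left block `B` are counted by `SI K κ`. -/
lemma card_fiber_block (H : Matrix ι ι K) (hH : H.IsSymm) (hU : IsUnit H.det)
    (B : Matrix κ ι K) :
    Nat.card {A : Matrix (ι ⊕ κ) (ι ⊕ κ) K //
        (A.IsSymm ∧ A.det ≠ 0) ∧ A.toBlocks₁₁ = H ∧ A.toBlocks₂₁ = B}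
      = Nat.card (SI K κ) := by
  haveI : Invertible H := H.invertibleOfIsUnitDet hU
  have hHdet : H.det ≠ 0 := hU.ne_zero
  have hdetA : ∀ C : Matrix κ κ K, (fromBlocks H Bᵀ B C).det = H.det * (C - B * H⁻¹ * Bᵀ).det := by
    intro C
    rw [det_fromBlocks₁₁, invOf_eq_nonsing_inv]
  refine Nat.card_congr ?_
  refine
    { toFun := fun A => ⟨A.1.toBlocks₂₂ - B * H⁻¹ * Bᵀ, by
        obtain ⟨A, ⟨hs, hd⟩, h11, h21⟩ := A
        have hA : A = fromBlocks H Bᵀ B A.toBlocks₂₂ := by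
          conv_lhs => rw [← fromBlocks_toBlocks A]
          rw [h11, h21]
          rw [toBlocks₁₂_of_isSymm hs, h21]
        have h22 : A.toBlocks₂₂.IsSymm := by
          rw [hA] at hs
          exact (isSymm_fromBlocks_iff.mp hs).2.2.2
        constructor
        · exact h22.sub (isSymm_BHB H hH B)
        · intro h
          apply hd
          rw [hA, hdetA, h, mul_zero]⟩
      invFun := fun D => ⟨fromBlocks H Bᵀ B (D.1 + B * H⁻¹ * Bᵀ), by
        obtain ⟨D, hs, hd⟩ := D
        refine ⟨⟨?_, ?_⟩, ?_, ?_⟩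
        · exact IsSymm.fromBlocks hH (transpose_transpose B) (hs.add (isSymm_BHB H hH B))
        · rw [hdetA, add_sub_cancel_right]
          exact mul_ne_zero hHdet hd
        · simp [toBlocks_fromBlocks₁₁]
        · simp [toBlocks_fromBlocks₂₁]⟩
      left_inv := by
        rintro ⟨A, ⟨hs, hd⟩, h11, h21⟩
        apply Subtype.ext
        simp only [sub_add_cancel]
        conv_rhs => rw [← fromBlocks_toBlocks A]
        rw [h11, h21]
        rw [toBlocks₁₂_of_isSymm hs, h21]
      right_inv := by
        rintro ⟨D, hs, hd⟩
        apply Subtype.ext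
        simp [toBlocks_fromBlocks₂₂] }

end block



section transport
variable {σ : Type*} [Fintype σ] [DecidableEq σ]

/-- The predicate: symmetric invertible with prescribed first column `(c, b)`. -/
def ColPred (A : Matrix (Fin 1 ⊕ σ) (Fin 1 ⊕ σ) K) (c : K) (b : σ → K) : Prop :=
  (A.IsSymm ∧ A.det ≠ 0) ∧ A (Sum.inl 0) (Sum.inl 0) = c ∧ (fun k => A (Sum.inr k) (Sum.inl 0)) = b

lemma card_colPred_congr (g : Matrix σ σ K) (hg : IsUnit g.det) (c : K) (b : σ → K) :
    Nat.card {A : Matrix (Fin 1 ⊕ σ) (Fin 1 ⊕ σ) K // ColPred A c b}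
      = Nat.card {A : Matrix (Fin 1 ⊕ σ) (Fin 1 ⊕ σ) K // ColPred A c (Matrix.vecMul b g)} := by
  haveI : Invertible g := g.invertibleOfIsUnitDet hg
  set G : Matrix (Fin 1 ⊕ σ) (Fin 1 ⊕ σ) K := fromBlocks 1 0 0 g with hG
  set G' : Matrix (Fin 1 ⊕ σ) (Fin 1 ⊕ σ) K := fromBlocks 1 0 0 (⅟g) with hG'
  have hGG' : G * G' = 1 := by
    rw [hG, hG', fromBlocks_multiply]
    simp [fromBlocks_one]
  have hG'G : G' * G = 1 := by
    rw [hG, hG', fromBlocks_multiply]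
    simp [fromBlocks_one]
  -- entries of G in the first column
  have hGcol : ∀ u, G u (Sum.inl 0) = if u = Sum.inl 0 then 1 else 0 := by
    rintro (i | k)
    · simp [hG, fromBlocks_apply₁₁, Fin.fin_one_eq_zero i, one_apply]
    · simp [hG, fromBlocks_apply₂₁]
  have hAG : ∀ (A : Matrix (Fin 1 ⊕ σ) (Fin 1 ⊕ σ) K) s, (A * G) s (Sum.inl 0) = A s (Sum.inl 0) := by
    intro A s
    rw [mul_apply]
    rw [Finset.sum_eq_single (Sum.inl 0)]
    · rw [hGcol]; simp
    · intro u _ hu; rw [hGcol]; simp [hu]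
    · intro h; exact absurd (Finset.mem_univ _) h
  have hcol0 : ∀ (A : Matrix (Fin 1 ⊕ σ) (Fin 1 ⊕ σ) K),
      (Gᵀ * A * G) (Sum.inl 0) (Sum.inl 0) = A (Sum.inl 0) (Sum.inl 0) := by
    intro A
    rw [hAG (Gᵀ * A), mul_apply]
    rw [Finset.sum_eq_single (Sum.inl 0)]
    · rw [transpose_apply, hGcol]; simp
    · intro u _ hu; rw [transpose_apply, hGcol]; simp [hu]
    · intro h; exact absurd (Finset.mem_univ _) h
  have hcolr : ∀ (A : Matrix (Fin 1 ⊕ σ) (Fin 1 ⊕ σ) K),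
      (fun k => (Gᵀ * A * G) (Sum.inr k) (Sum.inl 0))
        = Matrix.vecMul (fun k => A (Sum.inr k) (Sum.inl 0)) g := by
    intro A
    funext j
    rw [hAG (Gᵀ * A), mul_apply, Matrix.vecMul, dotProduct]
    rw [Fintype.sum_sum_type]
    simp only [transpose_apply]
    have h1 : ∀ i : Fin 1, G (Sum.inl i) (Sum.inr j) = 0 := by
      intro i; simp [hG, fromBlocks_apply₁₂]
    have h2 : ∀ k : σ, G (Sum.inr k) (Sum.inr j) = g k j := by
      intro k; simp [hG, fromBlocks_apply₂₂]
    simp only [h1, h2, zero_mul, Finset.sum_const_zero, zero_add]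
    exact Finset.sum_congr rfl fun k _ => mul_comm _ _
  -- symmetry and determinant transfer
  have hsymm : ∀ (G₀ : Matrix (Fin 1 ⊕ σ) (Fin 1 ⊕ σ) K) (A : Matrix (Fin 1 ⊕ σ) (Fin 1 ⊕ σ) K),
      A.IsSymm → (G₀ᵀ * A * G₀).IsSymm := by
    intro G₀ A hA
    unfold Matrix.IsSymm
    rw [transpose_mul, transpose_mul, transpose_transpose, hA.eq, Matrix.mul_assoc]
  have hinv : ∀ A : Matrix (Fin 1 ⊕ σ) (Fin 1 ⊕ σ) K, G'ᵀ * (Gᵀ * A * G) * G' = A := by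
    intro A
    calc G'ᵀ * (Gᵀ * A * G) * G' = (G * G')ᵀ * A * (G * G') := by
          rw [transpose_mul]
          noncomm_ring
      _ = A := by rw [hGG', transpose_one, one_mul, mul_one]
  have hinv' : ∀ A : Matrix (Fin 1 ⊕ σ) (Fin 1 ⊕ σ) K, Gᵀ * (G'ᵀ * A * G') * G = A := by
    intro A
    calc Gᵀ * (G'ᵀ * A * G') * G = (G' * G)ᵀ * A * (G' * G) := by
          rw [transpose_mul]
          noncomm_ring
      _ = A := by rw [hG'G, transpose_one, one_mul, mul_one]
  have hdetG : G.det = g.det := by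
    rw [hG, det_fromBlocks_zero₂₁, det_one, one_mul]
  have hdetG' : G'.det ≠ 0 := by
    rw [hG', det_fromBlocks_zero₂₁, det_one, one_mul]
    exact (isUnit_det_of_invertible (⅟g)).ne_zero
  refine Nat.card_congr (Equiv.subtypeEquiv
    (⟨fun A => Gᵀ * A * G, fun A => G'ᵀ * A * G', hinv, fun A => ?_⟩ :
      Matrix (Fin 1 ⊕ σ) (Fin 1 ⊕ σ) K ≃ Matrix (Fin 1 ⊕ σ) (Fin 1 ⊕ σ) K) fun A => ?_)
  · exact hinv' A
  · simp only [Equiv.coe_fn_mk]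
    unfold ColPred
    constructor
    · rintro ⟨⟨h1, h2⟩, h3, h4⟩
      refine ⟨⟨hsymm G A h1, ?_⟩, ?_, ?_⟩
      · rw [det_mul, det_mul, det_transpose, hdetG]
        exact mul_ne_zero (mul_ne_zero hg.ne_zero h2) hg.ne_zero
      · rw [hcol0]; exact h3
      · rw [hcolr, h4]
    · rintro ⟨⟨h1, h2⟩, h3, h4⟩
      have hA : A = G'ᵀ * (Gᵀ * A * G) * G' := (hinv A).symm
      refine ⟨⟨?_, ?_⟩, ?_, ?_⟩
      · rw [hA]; exact hsymm G' _ h1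
      · intro h; rw [det_mul, det_mul, h, mul_zero, zero_mul] at h2; exact h2 rfl
      · rw [hcol0] at h3; exact h3
      · rw [hcolr] at h4
        have := congrArg (fun w => Matrix.vecMul w (⅟g)) h4
        simpa [Matrix.vecMul_vecMul, mul_invOf_self] using this
  done

end transport



lemma exists_invertible_row {σ : Type*} [Fintype σ] [DecidableEq σ] (i₀ : σ)
    {b : σ → K} (hb : b ≠ 0) :
    ∃ g : Matrix σ σ K, IsUnit g.det ∧ g i₀ = b := by
  classical
  have li : LinearIndepOn K id ({b} : Set (σ → K)) :=
    (linearIndepOn_singleton_iff K).mpr hb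
  let B0 := Module.Basis.extend li
  haveI : Fintype ↥(li.extend (Set.subset_univ _)) := FiniteDimensional.fintypeBasisIndex B0
  have hcard : Fintype.card ↥(li.extend (Set.subset_univ _)) = Fintype.card σ := by
    have h1 := Module.finrank_eq_card_basis B0
    have h2 : Module.finrank K (σ → K) = Fintype.card σ := by
      simp [Module.finrank_pi]
    rw [h2] at h1
    exact h1.symm
  have hbmem : b ∈ li.extend (Set.subset_univ _) := li.subset_extend _ rfl
  let e : σ ≃ ↥(li.extend (Set.subset_univ _)) := Fintype.equivOfCardEq hcard.symm
  let e' : σ ≃ ↥(li.extend (Set.subset_univ _)) :=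
    e.trans (Equiv.swap (e i₀) ⟨b, hbmem⟩)
  have he' : e' i₀ = ⟨b, hbmem⟩ := by
    simp [e', Equiv.swap_apply_left]
  let C : Module.Basis σ K (σ → K) := B0.reindex e'.symm
  have hC : C i₀ = b := by
    have : C i₀ = B0 (e' i₀) := by simp [C, Module.Basis.reindex_apply]
    rw [this, he']
    exact Module.Basis.extend_apply_self li _
  refine ⟨((Pi.basisFun K σ).toMatrix C)ᵀ, ?_, ?_⟩
  · haveI := (Pi.basisFun K σ).invertibleToMatrix C
    rw [det_transpose]
    exact isUnit_det_of_invertible _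
  · funext j
    rw [transpose_apply, Module.Basis.toMatrix_apply, Pi.basisFun_repr, hC]





-- check small items
section scratch
variable {ι κ : Type*} [Fintype ι] [DecidableEq ι] [Fintype κ] [DecidableEq κ]

lemma SIpred_reindex_iff (e : ι ≃ κ) (A : Matrix ι ι K) :
    ((reindex e e A).IsSymm ∧ (reindex e e A).det ≠ 0) ↔ (A.IsSymm ∧ A.det ≠ 0) := by
  rw [reindex_apply, det_submatrix_equiv_self]
  constructor
  · rintro ⟨h1, h2⟩
    have := h1.submatrix e
    simp only [submatrix_submatrix, Equiv.symm_comp_self, submatrix_id_id] at this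
    exact ⟨this, h2⟩
  · rintro ⟨h1, h2⟩
    exact ⟨h1.submatrix _, h2⟩

-- hyperbolic 2x2 block
def Hyp (t : K) : Matrix (Fin 1 ⊕ Fin 1) (Fin 1 ⊕ Fin 1) K :=
  fromBlocks 0 (of fun _ _ => 1) (of fun _ _ => 1) (of fun _ _ => t)

lemma Hyp_isSymm (t : K) : (Hyp t).IsSymm := by
  apply Matrix.IsSymm.ext
  rintro (i | i) (j | j) <;>
    simp [Hyp, fromBlocks_apply₁₁, fromBlocks_apply₁₂, fromBlocks_apply₂₁, fromBlocks_apply₂₂]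

def ee2 : Fin 2 ≃ (Fin 1 ⊕ Fin 1) where
  toFun := ![Sum.inl 0, Sum.inr 0]
  invFun := Sum.elim (fun _ => 0) (fun _ => 1)
  left_inv := by decide
  right_inv := by rintro (i | i) <;> simp [Fin.fin_one_eq_zero i]

lemma Hyp_det (t : K) : (Hyp t).det = -1 := by
  rw [← det_submatrix_equiv_self ee2 (Hyp t), det_fin_two]
  simp [ee2, Hyp, submatrix_apply, fromBlocks_apply₁₁, fromBlocks_apply₁₂,
    fromBlocks_apply₂₁, fromBlocks_apply₂₂]

lemma Hyp_det_isUnit (t : K) : IsUnit (Hyp t).det := by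
  rw [Hyp_det]; exact isUnit_one.neg

end scratch

section fibers
variable {σ : Type*} [Fintype σ] [DecidableEq σ]

lemma card_colPred_ne_zero {c : K} (hc : c ≠ 0) (b : σ → K) :
    Nat.card {A : Matrix (Fin 1 ⊕ σ) (Fin 1 ⊕ σ) K // ColPred A c b} = Nat.card (SI K σ) := by
  have hsymm : (of fun _ _ => c : Matrix (Fin 1) (Fin 1) K).IsSymm :=
    Matrix.IsSymm.ext fun i j => rfl
  have hunit : IsUnit (of fun _ _ => c : Matrix (Fin 1) (Fin 1) K).det := by
    rw [det_fin_one]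
    exact isUnit_iff_ne_zero.mpr hc
  rw [← card_fiber_block (K := K) (of fun _ _ => c) hsymm hunit (of fun k _ => b k)]
  refine Nat.card_congr (Equiv.subtypeEquivRight fun A => ?_)
  unfold ColPred
  constructor
  · rintro ⟨hP, h1, h2⟩
    refine ⟨hP, ?_, ?_⟩
    · ext i j
      rw [Fin.fin_one_eq_zero i, Fin.fin_one_eq_zero j]
      simpa [toBlocks₁₁] using h1
    · ext k j
      rw [Fin.fin_one_eq_zero j]
      simpa [toBlocks₂₁] using congrFun h2 k
  · rintro ⟨hP, hb1, hb2⟩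
    refine ⟨hP, ?_, ?_⟩
    · have := Matrix.ext_iff.mpr hb1 0 0
      simpa [toBlocks₁₁] using this
    · funext k
      have := Matrix.ext_iff.mpr hb2 k 0
      simpa [toBlocks₂₁] using this

lemma card_colPred_zero_zero :
    Nat.card {A : Matrix (Fin 1 ⊕ σ) (Fin 1 ⊕ σ) K // ColPred A 0 (0 : σ → K)} = 0 := by
  rw [Nat.card_eq_zero]
  left
  constructor
  rintro ⟨A, ⟨hs, hd⟩, h1, h2⟩
  apply hd
  apply det_eq_zero_of_column_eq_zero (Sum.inl 0)
  rintro (i | k)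
  · rw [Fin.fin_one_eq_zero i]; exact h1
  · exact congrFun h2 k

end fibers

section zerosingle
variable (K)

lemma card_colPred_zero_single (m : ℕ) :
    Nat.card {A : Matrix (Fin 1 ⊕ (Fin 1 ⊕ Fin m)) (Fin 1 ⊕ (Fin 1 ⊕ Fin m)) K //
        ColPred A 0 (Pi.single (Sum.inl 0) (1 : K))}
      = Fintype.card K ^ (m + 1) * Nat.card (SI K (Fin m)) := by
  classical
  set α := Equiv.sumAssoc (Fin 1) (Fin 1) (Fin m) with hα
  set Q : Matrix ((Fin 1 ⊕ Fin 1) ⊕ Fin m) ((Fin 1 ⊕ Fin 1) ⊕ Fin m) K → Prop := fun A =>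
    (A.IsSymm ∧ A.det ≠ 0) ∧ A (.inl (.inl 0)) (.inl (.inl 0)) = 0 ∧
      A (.inl (.inr 0)) (.inl (.inl 0)) = 1 ∧ ∀ j : Fin m, A (.inr j) (.inl (.inl 0)) = 0
    with hQ
  have step1 : Nat.card {A : Matrix (Fin 1 ⊕ (Fin 1 ⊕ Fin m)) (Fin 1 ⊕ (Fin 1 ⊕ Fin m)) K //
      ColPred A 0 (Pi.single (Sum.inl 0) (1 : K))}
      = Nat.card {A : Matrix ((Fin 1 ⊕ Fin 1) ⊕ Fin m) ((Fin 1 ⊕ Fin 1) ⊕ Fin m) K // Q A} := by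
    refine Nat.card_congr (Equiv.subtypeEquiv (reindex α.symm α.symm) fun A => ?_)
    unfold ColPred
    rw [hQ]
    constructor
    · rintro ⟨hP, h1, h2⟩
      refine ⟨(SIpred_reindex_iff α.symm A).mpr hP, ?_, ?_, ?_⟩
      · simpa [α] using h1
      · have := congrFun h2 (Sum.inl 0)
        simpa [α] using this
      · intro j
        have := congrFun h2 (Sum.inr j)
        simpa [α] using this
    · rintro ⟨hP, h1, h2, h3⟩
      refine ⟨(SIpred_reindex_iff α.symm A).mp hP, ?_, ?_⟩
      · simpa [α] using h1
      · funext k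
        rcases k with k | j
        · rw [Fin.fin_one_eq_zero k]
          simpa [α] using h2
        · have := h3 j
          simpa [α] using this
  rw [step1]
  rw [card_subtype_fiberwise Q (fun A => (A (.inl (.inr 0)) (.inl (.inr 0)),
      fun j => A (.inr j) (.inl (.inr 0))))]
  have step3 : ∀ v : K × (Fin m → K),
      Nat.card {A : Matrix ((Fin 1 ⊕ Fin 1) ⊕ Fin m) ((Fin 1 ⊕ Fin 1) ⊕ Fin m) K // Q A ∧
        (A (.inl (.inr 0)) (.inl (.inr 0)), fun j => A (.inr j) (.inl (.inr 0))) = v}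
      = Nat.card (SI K (Fin m)) := by
    rintro ⟨t, d⟩
    rw [← card_fiber_block (K := K) (Hyp t) (Hyp_isSymm t) (Hyp_det_isUnit t)
      (of fun j s => Sum.elim (fun _ => (0 : K)) (fun _ => d j) s)]
    refine Nat.card_congr (Equiv.subtypeEquivRight fun A => ?_)
    rw [hQ, Prod.mk.injEq]
    constructor
    · rintro ⟨⟨hP, h1, h2, h3⟩, ht, hd⟩
      refine ⟨hP, ?_, ?_⟩
      · ext x y
        rcases x with x | x <;> rcases y with y | y <;>
          rw [Fin.fin_one_eq_zero x, Fin.fin_one_eq_zero y]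
        · simpa [Hyp, toBlocks₁₁] using h1
        · have := hP.1.apply (.inl (.inr 0)) (.inl (.inl 0))
          rw [h2] at this
          simpa [Hyp, toBlocks₁₁] using this
        · simpa [Hyp, toBlocks₁₁] using h2
        · simpa [Hyp, toBlocks₁₁] using ht
      · ext j s
        rcases s with s | s <;> rw [Fin.fin_one_eq_zero s]
        · simpa [toBlocks₂₁] using h3 j
        · simpa [toBlocks₂₁] using congrFun hd j
    · rintro ⟨hP, hb1, hb2⟩
      have e11 := Matrix.ext_iff.mpr hb1
      have e21 := Matrix.ext_iff.mpr hb2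
      refine ⟨⟨hP, ?_, ?_, ?_⟩, ?_, ?_⟩
      · simpa [Hyp, toBlocks₁₁] using e11 (.inl 0) (.inl 0)
      · simpa [Hyp, toBlocks₁₁] using e11 (.inr 0) (.inl 0)
      · intro j
        simpa [toBlocks₂₁] using e21 j (.inl 0)
      · simpa [Hyp, toBlocks₁₁] using e11 (.inr 0) (.inr 0)
      · funext j
        simpa [toBlocks₂₁] using e21 j (.inr 0)
  rw [Finset.sum_congr rfl fun v _ => step3 v, Finset.sum_const, smul_eq_mul]
  congr 1
  simp [Fintype.card_prod, Fintype.card_fun]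
  ring

end zerosingle

section mainrec
variable (K)

lemma card_SI_rec (m : ℕ) :
    Nat.card (SI K (Fin (m + 2))) =
      (Fintype.card K - 1) * (Fintype.card K ^ (m + 1) * Nat.card (SI K (Fin (m + 1))))
      + (Fintype.card K ^ (m + 1) - 1) *
          (Fintype.card K ^ (m + 1) * Nat.card (SI K (Fin m))) := by
  classical
  have e1 : (Fin 1 ⊕ Fin m) ≃ Fin (m + 1) := finSumFinEquiv.trans (finCongr (by omega))
  have e2 : (Fin 1 ⊕ (Fin 1 ⊕ Fin m)) ≃ Fin (m + 2) :=
    (Equiv.sumCongr (Equiv.refl (Fin 1)) e1).trans (finSumFinEquiv.trans (finCongr (by omega)))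
  rw [← card_SI_congr (K := K) e2, ← card_SI_congr (K := K) e1]
  have hcardfun : Fintype.card ((Fin 1 ⊕ Fin m) → K) = Fintype.card K ^ (m + 1) := by
    rw [Fintype.card_fun]
    congr 1
    simp [add_comm]
  -- fiber over the corner entry
  have h0 : Nat.card (SI K (Fin 1 ⊕ (Fin 1 ⊕ Fin m)))
      = ∑ c : K, Nat.card {A : Matrix (Fin 1 ⊕ (Fin 1 ⊕ Fin m)) (Fin 1 ⊕ (Fin 1 ⊕ Fin m)) K //
          (A.IsSymm ∧ A.det ≠ 0) ∧ A (Sum.inl 0) (Sum.inl 0) = c} :=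
    card_subtype_fiberwise _ _
  -- fiber over the rest of the first column
  have h1 : ∀ c : K, Nat.card {A : Matrix (Fin 1 ⊕ (Fin 1 ⊕ Fin m)) (Fin 1 ⊕ (Fin 1 ⊕ Fin m)) K //
          (A.IsSymm ∧ A.det ≠ 0) ∧ A (Sum.inl 0) (Sum.inl 0) = c}
      = ∑ b : (Fin 1 ⊕ Fin m) → K,
          Nat.card {A : Matrix (Fin 1 ⊕ (Fin 1 ⊕ Fin m)) (Fin 1 ⊕ (Fin 1 ⊕ Fin m)) K //
            ColPred A c b} := by
    intro c
    rw [card_subtype_fiberwise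
      (fun A : Matrix (Fin 1 ⊕ (Fin 1 ⊕ Fin m)) (Fin 1 ⊕ (Fin 1 ⊕ Fin m)) K =>
        (A.IsSymm ∧ A.det ≠ 0) ∧ A (Sum.inl 0) (Sum.inl 0) = c)
      (fun A => fun k => A (Sum.inr k) (Sum.inl 0))]
    refine Finset.sum_congr rfl fun b _ => Nat.card_congr (Equiv.subtypeEquivRight fun A => ?_)
    unfold ColPred
    tauto
  -- fibers with nonzero corner
  have h2 : ∀ c : K, c ≠ 0 →
      Nat.card {A : Matrix (Fin 1 ⊕ (Fin 1 ⊕ Fin m)) (Fin 1 ⊕ (Fin 1 ⊕ Fin m)) K //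
          (A.IsSymm ∧ A.det ≠ 0) ∧ A (Sum.inl 0) (Sum.inl 0) = c}
      = Fintype.card K ^ (m + 1) * Nat.card (SI K (Fin 1 ⊕ Fin m)) := by
    intro c hc
    rw [h1 c]
    rw [Finset.sum_congr rfl fun b _ => card_colPred_ne_zero hc b, Finset.sum_const,
      smul_eq_mul, Finset.card_univ, hcardfun]
  -- fibers with zero corner
  have h3 : ∀ b : (Fin 1 ⊕ Fin m) → K, b ≠ 0 →
      Nat.card {A : Matrix (Fin 1 ⊕ (Fin 1 ⊕ Fin m)) (Fin 1 ⊕ (Fin 1 ⊕ Fin m)) K //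
          ColPred A 0 b}
      = Fintype.card K ^ (m + 1) * Nat.card (SI K (Fin m)) := by
    intro b hb
    obtain ⟨g, hg, hrow⟩ := exists_invertible_row (Sum.inl 0) hb
    have := card_colPred_congr g hg 0 (Pi.single (Sum.inl 0) (1 : K))
    rw [Matrix.single_one_vecMul, Matrix.row_apply', hrow] at this
    rw [← this, card_colPred_zero_single]
  have h4 : Nat.card {A : Matrix (Fin 1 ⊕ (Fin 1 ⊕ Fin m)) (Fin 1 ⊕ (Fin 1 ⊕ Fin m)) K //
          (A.IsSymm ∧ A.det ≠ 0) ∧ A (Sum.inl 0) (Sum.inl 0) = 0}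
      = (Fintype.card K ^ (m + 1) - 1) * (Fintype.card K ^ (m + 1) * Nat.card (SI K (Fin m))) := by
    rw [h1 0]
    rw [← Finset.sum_erase_add _ _ (Finset.mem_univ (0 : (Fin 1 ⊕ Fin m) → K))]
    rw [card_colPred_zero_zero, add_zero]
    rw [Finset.sum_congr rfl fun b hb => h3 b (Finset.ne_of_mem_erase hb), Finset.sum_const,
      smul_eq_mul, Finset.card_erase_of_mem (Finset.mem_univ _), Finset.card_univ, hcardfun]
  rw [h0, ← Finset.sum_erase_add _ _ (Finset.mem_univ (0 : K)), h4]
  rw [Finset.sum_congr rfl fun c hc => h2 c (Finset.ne_of_mem_erase hc), Finset.sum_const,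
    smul_eq_mul, Finset.card_erase_of_mem (Finset.mem_univ _), Finset.card_univ]

end mainrec

section bases
variable (K)

lemma card_SI_zero : Nat.card (SI K (Fin 0)) = 1 := by
  haveI : Unique (SI K (Fin 0)) :=
    { default := ⟨0, isSymm_zero, by rw [det_fin_zero]; exact one_ne_zero⟩
      uniq := fun A => Subtype.ext (by ext i j; exact i.elim0) }
  exact Nat.card_unique

lemma card_SI_one : Nat.card (SI K (Fin 1)) = Fintype.card K - 1 := by
  have e : SI K (Fin 1) ≃ {c : K // c ≠ 0} :=
    { toFun := fun A => ⟨A.1 0 0, fun h => A.2.2 (by rw [det_fin_one, h])⟩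
      invFun := fun c => ⟨of fun _ _ => c.1, Matrix.IsSymm.ext fun i j => rfl,
        by rw [det_fin_one]; exact c.2⟩
      left_inv := fun A => Subtype.ext (by
        ext i j
        rw [Fin.fin_one_eq_zero i, Fin.fin_one_eq_zero j]
        rfl)
      right_inv := fun c => rfl }
  rw [Nat.card_congr e, Nat.card_eq_fintype_card, Fintype.card_subtype_compl,
    Fintype.card_subtype_eq]

end bases

section numeric

lemma tri_succ (k : ℕ) : (k + 1) * ((k + 1) + 1) / 2 = k * (k + 1) / 2 + (k + 1) :=
  calc (k + 1) * ((k + 1) + 1) / 2 = (k * (k + 1) + 2 * (k + 1)) / 2 := by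
        congr 1
        ring
    _ = k * (k + 1) / 2 + (k + 1) := Nat.add_mul_div_left _ _ (by norm_num)

lemma nsym_zero (p : ℕ) (hp : p.Prime) : Nsym 0 p = 1 := by
  haveI : Fact p.Prime := ⟨hp⟩
  exact card_SI_zero (ZMod p)

lemma nsym_one (p : ℕ) (hp : p.Prime) : Nsym 1 p = p - 1 := by
  haveI : Fact p.Prime := ⟨hp⟩
  have := card_SI_one (ZMod p)
  rwa [ZMod.card] at this

lemma nsym_rec (p m : ℕ) (hp : p.Prime) :
    Nsym (m + 2) p = (p - 1) * (p ^ (m + 1) * Nsym (m + 1) p)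
      + (p ^ (m + 1) - 1) * (p ^ (m + 1) * Nsym m p) := by
  haveI : Fact p.Prime := ⟨hp⟩
  have := card_SI_rec (ZMod p) m
  rwa [ZMod.card] at this

lemma psym_zero (p : ℕ) (hp : p.Prime) : Psym 0 p = 1 := by
  unfold Psym
  rw [nsym_zero p hp]
  norm_num

lemma psym_one (p : ℕ) (hp : p.Prime) : Psym 1 p = 1 - 1 / p := by
  have hp0 : (0 : ℝ) < p := by exact_mod_cast hp.pos
  unfold Psym
  rw [nsym_one p hp]
  rw [Nat.cast_sub hp.one_lt.le]
  push_cast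
  norm_num
  field_simp

lemma psym_rec (p m : ℕ) (hp : p.Prime) :
    Psym (m + 2) p = (1 - 1 / p) * Psym (m + 1) p
      + (1 / p) * (1 - (1 / (p : ℝ)) ^ (m + 1)) * Psym m p := by
  have hp0 : (0 : ℝ) < p := by exact_mod_cast hp.pos
  have hpne : (p : ℝ) ≠ 0 := ne_of_gt hp0
  have h1le : 1 ≤ p := hp.one_lt.le
  have h1lepow : 1 ≤ p ^ (m + 1) := Nat.one_le_pow _ _ hp.pos
  have hcast : (Nsym (m + 2) p : ℝ)
      = ((p : ℝ) - 1) * ((p : ℝ) ^ (m + 1) * Nsym (m + 1) p)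
        + ((p : ℝ) ^ (m + 1) - 1) * ((p : ℝ) ^ (m + 1) * Nsym m p) := by
    rw [nsym_rec p m hp]
    push_cast [Nat.cast_sub h1le, Nat.cast_sub h1lepow]
    ring
  unfold Psym
  have E2 : (m + 2) * ((m + 2) + 1) / 2 = (m + 1) * ((m + 1) + 1) / 2 + (m + 2) :=
    tri_succ (m + 1)
  have E1 : (m + 1) * ((m + 1) + 1) / 2 = m * (m + 1) / 2 + (m + 1) := tri_succ m
  rw [E2, E1, hcast]
  rw [pow_add, pow_add]
  have ha : (p : ℝ) ^ (m * (m + 1) / 2) ≠ 0 := pow_ne_zero _ hpne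
  have hb : (p : ℝ) ^ (m + 1) ≠ 0 := pow_ne_zero _ hpne
  have hc : (p : ℝ) ^ (m + 2) ≠ 0 := pow_ne_zero _ hpne
  field_simp
  rw [div_pow, one_pow]
  field_simp
  ring

lemma psym_even (p k : ℕ) (hp : p.Prime) : Psym (2 * k + 2) p = Psym (2 * k + 1) p := by
  induction k with
  | zero =>
    simp only [Nat.mul_zero, Nat.zero_add]
    rw [show (2 : ℕ) = 0 + 2 from rfl, psym_rec p 0 hp]
    rw [psym_zero p hp, psym_one p hp]
    ring
  | succ k ih =>
    have hodd : Psym (2 * k + 3) p = (1 - (1 / (p : ℝ)) ^ (2 * k + 3)) * Psym (2 * k + 1) p := by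
      rw [show 2 * k + 3 = (2 * k + 1) + 2 by ring, psym_rec p (2 * k + 1) hp]
      rw [show (2 * k + 1) + 1 = 2 * k + 2 by ring, ih]
      ring
    rw [show 2 * (k + 1) + 2 = (2 * k + 2) + 2 by ring, psym_rec p (2 * k + 2) hp]
    rw [show (2 * k + 2) + 1 = 2 * k + 3 by ring, show 2 * (k + 1) + 1 = 2 * k + 3 by ring]
    rw [hodd, ih]
    ring

end numeric

theorem Psym_odd_recurrence_prime (p : ℕ) (hp : p.Prime) (q : ℝ)
    (hq : q = 1 / p) (n : ℕ) (hn : 3 ≤ n) (hodd : Odd n) :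
    Psym n p = (1 - q ^ n) * Psym (n - 2) p := by
  subst hq
  obtain ⟨j, hj⟩ := hodd
  have hk : ∃ k, n = 2 * k + 3 := ⟨j - 1, by omega⟩
  obtain ⟨k, rfl⟩ := hk
  have h2 : 2 * k + 3 - 2 = 2 * k + 1 := by omega
  rw [h2]
  rw [show 2 * k + 3 = (2 * k + 1) + 2 by ring, psym_rec p (2 * k + 1) hp]
  rw [show (2 * k + 1) + 1 = 2 * k + 2 by ring, psym_even p k hp]
  rw [show (2 * k + 1) + 2 = 2 * k + 3 by ring]
  ring
end

section
/- Let q be a real number with 0 < q < 1 and let k ≥ 0 and s ≥ 0 be integers. Then T_1(k,s) = (Π_k(q²)/Π_{2k}(q)) · (1 − q^{s+1} · ∑_{j=0}^{k−1} q^{2j} · Π_{2j}(q)·Π_{j+s}(q²) / (Π_j(q²)² · Π_s(q²))). -/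
/-- `Π_n(t) = ∏_{j=1}^n (1 - t^j)`. -/
noncomputable def PiProd (n : ℕ) (t : ℝ) : ℝ :=
  ∏ j ∈ Finset.range n, (1 - t ^ (j + 1))

/-- `T_β(k,s)`: equal to `1` if `k = 0`, and to
`∑_{j=0}^{s} q^{βj} · Π_{k+j−1}(q²) / (Π_j(q²) · Π_{k−1}(q²))` if `k ≥ 1`. -/
noncomputable def T (q : ℝ) (β k s : ℕ) : ℝ :=
  if k = 0 then 1
  else ∑ j ∈ Finset.range (s + 1),
    q ^ (β * j) * PiProd (k + j - 1) (q ^ 2) / (PiProd j (q ^ 2) * PiProd (k - 1) (q ^ 2))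

lemma one_sub_pow_ne_zero {t : ℝ} (h0 : 0 ≤ t) (h1 : t < 1) (n : ℕ) :
    1 - t ^ (n + 1) ≠ 0 := by
  have : t ^ (n+1) < 1 := pow_lt_one₀ h0 h1 (Nat.succ_ne_zero n)
  linarith

lemma PiProd_pos {t : ℝ} (h0 : 0 ≤ t) (h1 : t < 1) (n : ℕ) : 0 < PiProd n t := by
  unfold PiProd
  refine Finset.prod_pos fun j _ => ?_
  have : t ^ (j+1) < 1 := pow_lt_one₀ h0 h1 (Nat.succ_ne_zero j)
  linarith

lemma PiProd_succ (n : ℕ) (t : ℝ) : PiProd (n+1) t = PiProd n t * (1 - t^(n+1)) :=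
  Finset.prod_range_succ _ _

lemma PiProd_zero (t : ℝ) : PiProd 0 t = 1 := Finset.prod_range_zero _

lemma q2_mem {q : ℝ} (hq0 : 0 < q) (hq1 : q < 1) : (0:ℝ) ≤ q^2 ∧ q^2 < 1 :=
  ⟨sq_nonneg q, by nlinarith⟩

lemma lemA {q : ℝ} (hq0 : 0 < q) (hq1 : q < 1) (k : ℕ) :
    1 - ∑ j ∈ Finset.range k, q ^ (2*j+1) * PiProd (2*j) q / PiProd j (q^2)
      = PiProd (2*k) q / PiProd k (q^2) := by
  obtain ⟨h2a, h2b⟩ := q2_mem hq0 hq1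
  induction k with
  | zero => simp [PiProd]
  | succ k ih =>
    rw [Finset.sum_range_succ, sub_add_eq_sub_sub_swap, sub_right_comm]
    rw [ih]
    rw [show 2*(k+1) = 2*k+1+1 by ring, PiProd_succ, PiProd_succ, PiProd_succ]
    have hPk : PiProd k (q^2) ≠ 0 := (PiProd_pos h2a h2b k).ne'
    have hf : (1 - (q^2)^(k+1)) ≠ 0 := one_sub_pow_ne_zero h2a h2b k
    field_simp
    ring

lemma lemB {q : ℝ} (hq0 : 0 < q) (hq1 : q < 1) (s k : ℕ) :
    ∑ j ∈ Finset.range (k+1),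
      q^(2*j) * PiProd (2*j) q * PiProd (j+s) (q^2) / (PiProd j (q^2)^2 * PiProd s (q^2))
        * (1 - q - q^(2*s+2) + q^(2*j+2*s+3))
      = PiProd (2*k+2) q * PiProd (k+1+s) (q^2) /
        (PiProd (k+1) (q^2) * PiProd k (q^2) * PiProd s (q^2)) := by
  obtain ⟨h2a, h2b⟩ := q2_mem hq0 hq1
  have hPs : PiProd s (q^2) ≠ 0 := (PiProd_pos h2a h2b s).ne'
  induction k with
  | zero =>
    have e2 : PiProd 2 q = (1-q)*(1-q^2) := by
      show (∏ j ∈ Finset.range 2, (1 - q ^ (j+1))) = _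
      rw [Finset.prod_range_succ, Finset.prod_range_one]
      ring
    have e1 : PiProd 1 (q^2) = 1-(q^2)^1 := by
      show (∏ j ∈ Finset.range 1, _) = _
      rw [Finset.prod_range_one]
    have e0 : PiProd 0 q = 1 := Finset.prod_range_zero _
    have e0' : PiProd 0 (q^2) = 1 := Finset.prod_range_zero _
    have es1 : PiProd (1+s) (q^2) = PiProd s (q^2) * (1 - (q^2)^(s+1)) := by
      rw [add_comm]; exact PiProd_succ s _
    rw [Finset.sum_range_one]
    norm_num [e2, e1, e0, e0', es1]
    have hf : (1 - (q^2)^(s+1)) ≠ 0 := one_sub_pow_ne_zero h2a h2b s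
    have hq2ne : (1:ℝ) - q^2 ≠ 0 := by nlinarith
    field_simp
    ring
  | succ k ih =>
    rw [Finset.sum_range_succ, ih]
    have hPk : PiProd k (q^2) ≠ 0 := (PiProd_pos h2a h2b k).ne'
    have hf1 : (1 - (q^2)^(k+1)) ≠ 0 := one_sub_pow_ne_zero h2a h2b k
    have hf2 : (1 - (q^2)^(k+1+1)) ≠ 0 := one_sub_pow_ne_zero h2a h2b (k+1)
    rw [show 2*(k+1) = 2*k+2 by ring]
    rw [show 2*k+2+2 = (2*k+2+1)+1 by omega]
    rw [PiProd_succ (2*k+2+1) q, PiProd_succ (2*k+2) q]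
    rw [show k+1+1+s = (k+1+s)+1 by omega]
    rw [PiProd_succ (k+1+s) (q^2), PiProd_succ (k+1) (q^2), PiProd_succ k (q^2)]
    field_simp
    ring

lemma main_aux {q : ℝ} (hq0 : 0 < q) (hq1 : q < 1) (K s : ℕ) :
    ∑ j ∈ Finset.range (s+1), q^j * PiProd (K+j) (q^2) / (PiProd j (q^2) * PiProd K (q^2))
      = (PiProd (K+1) (q^2) / PiProd (2*K+2) q) *
        (1 - q^(s+1) * ∑ j ∈ Finset.range (K+1),
          q^(2*j) * PiProd (2*j) q * PiProd (j+s) (q^2) / (PiProd j (q^2)^2 * PiProd s (q^2))) := by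
  obtain ⟨h2a, h2b⟩ := q2_mem hq0 hq1
  have hPK : PiProd K (q^2) ≠ 0 := (PiProd_pos h2a h2b K).ne'
  have hPK1 : PiProd (K+1) (q^2) ≠ 0 := (PiProd_pos h2a h2b (K+1)).ne'
  have hP2K : PiProd (2*K+2) q ≠ 0 := (PiProd_pos hq0.le hq1 (2*K+2)).ne'
  induction s with
  | zero =>
    have hsum : q^(0+1) * ∑ j ∈ Finset.range (K+1),
        q^(2*j) * PiProd (2*j) q * PiProd (j+0) (q^2) / (PiProd j (q^2)^2 * PiProd 0 (q^2))
        = ∑ j ∈ Finset.range (K+1), q^(2*j+1) * PiProd (2*j) q / PiProd j (q^2) := by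
      rw [Finset.mul_sum]
      refine Finset.sum_congr rfl fun j _ => ?_
      have hPj : PiProd j (q^2) ≠ 0 := (PiProd_pos h2a h2b j).ne'
      rw [Nat.add_zero, PiProd_zero]
      field_simp
      ring
    rw [hsum, lemA hq0 hq1 (K+1), Finset.sum_range_one]
    rw [Nat.add_zero, PiProd_zero, pow_zero, show 2*(K+1) = 2*K+2 by ring]
    field_simp
  | succ s ih =>
    have hPs : PiProd s (q^2) ≠ 0 := (PiProd_pos h2a h2b s).ne'
    have hPs1 : PiProd (s+1) (q^2) ≠ 0 := (PiProd_pos h2a h2b (s+1)).ne'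
    have hx : (1 - (q^2)^(s+1)) ≠ 0 := one_sub_pow_ne_zero h2a h2b s
    rw [Finset.sum_range_succ, ih]
    set A := ∑ j ∈ Finset.range (K+1),
      q^(2*j) * PiProd (2*j) q * PiProd (j+s) (q^2) / (PiProd j (q^2)^2 * PiProd s (q^2)) with hAdef
    set B := ∑ j ∈ Finset.range (K+1),
      q^(2*j) * PiProd (2*j) q * PiProd (j+(s+1)) (q^2) / (PiProd j (q^2)^2 * PiProd (s+1) (q^2)) with hBdef
    have hsplit : A - q * B = PiProd (2*K+2) q * PiProd (K+1+s) (q^2) /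
        (PiProd (K+1) (q^2) * PiProd K (q^2) * PiProd s (q^2) * (1-(q^2)^(s+1))) := by
      have per : ∀ j ∈ Finset.range (K+1),
          q^(2*j) * PiProd (2*j) q * PiProd (j+s) (q^2) / (PiProd j (q^2)^2 * PiProd s (q^2))
            - q * (q^(2*j) * PiProd (2*j) q * PiProd (j+(s+1)) (q^2) /
              (PiProd j (q^2)^2 * PiProd (s+1) (q^2)))
          = q^(2*j) * PiProd (2*j) q * PiProd (j+s) (q^2) / (PiProd j (q^2)^2 * PiProd s (q^2))
              * (1 - q - q^(2*s+2) + q^(2*j+2*s+3)) / (1-(q^2)^(s+1)) := by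
        intro j _
        have hPj : PiProd j (q^2) ≠ 0 := (PiProd_pos h2a h2b j).ne'
        rw [show j+(s+1) = (j+s)+1 by omega, PiProd_succ (j+s) (q^2), PiProd_succ s (q^2)]
        field_simp
        ring
      rw [hAdef, hBdef, Finset.mul_sum, ← Finset.sum_sub_distrib]
      rw [Finset.sum_congr rfl per, ← Finset.sum_div, lemB hq0 hq1 s K, div_div]
    have hA : A = PiProd (2*K+2) q * PiProd (K+1+s) (q^2) /
        (PiProd (K+1) (q^2) * PiProd K (q^2) * PiProd s (q^2) * (1-(q^2)^(s+1))) + q * B := by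
      linarith [hsplit]
    rw [hA]
    rw [show K+(s+1) = K+1+s by omega, PiProd_succ s (q^2)]
    field_simp
    ring

theorem T_one_identity (q : ℝ) (hq0 : 0 < q) (hq1 : q < 1) (k s : ℕ) :
    T q 1 k s =
      (PiProd k (q ^ 2) / PiProd (2 * k) q) *
        (1 - q ^ (s + 1) * ∑ j ∈ Finset.range k,
          q ^ (2 * j) * PiProd (2 * j) q * PiProd (j + s) (q ^ 2) /
            (PiProd j (q ^ 2) ^ 2 * PiProd s (q ^ 2))) := by
  obtain rfl | ⟨K, rfl⟩ : k = 0 ∨ ∃ K, k = K + 1 := by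
    cases k with
    | zero => exact Or.inl rfl
    | succ n => exact Or.inr ⟨n, rfl⟩
  · simp [T, PiProd]
  · rw [show 2*(K+1) = 2*K+2 by ring, ← main_aux hq0 hq1 K s]
    unfold T
    rw [if_neg (Nat.succ_ne_zero K)]
    refine Finset.sum_congr rfl fun j _ => ?_
    rw [show K+1+j-1 = K+j by omega, show K+1-1 = K by omega, one_mul]
end

section
/- Let p be a prime, q = 1/p, and let n ≥ 1 and μ ≥ 1 be integers. Set k = ⌊n/2⌋, s = ⌊(μ−1)/2⌋, and R = q^{s+1} · ∑_{j=0}^{k−1} (q^μ(1−q^n) − q^{2s+2}(1−q^{2j+1})) · q^{2j} · Π_{2j}(q)·Π_{j+s}(q²) / (Π_j(q²)² · Π_s(q²)). Then R < q^{3μ/2}, where q^{3μ/2} denotes the real power p^{−3μ/2}. -/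
lemma PiProd_nonneg {t : ℝ} (h0 : 0 ≤ t) (h1 : t ≤ 1) (n : ℕ) : 0 ≤ PiProd n t := by
  apply Finset.prod_nonneg
  intro j _
  have : t ^ (j + 1) ≤ 1 := pow_le_one₀ h0 h1
  linarith

lemma PiProd_anti {t : ℝ} (h0 : 0 ≤ t) (h1 : t ≤ 1) {a b : ℕ} (hab : a ≤ b) :
    PiProd b t ≤ PiProd a t := by
  obtain ⟨c, rfl⟩ := Nat.exists_eq_add_of_le hab
  unfold PiProd
  rw [Finset.prod_range_add]
  have h2 : (∏ i ∈ Finset.range c, (1 - t ^ (a + i + 1))) ≤ 1 := by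
    apply Finset.prod_le_one
    · intro j _
      have : t ^ (a + j + 1) ≤ 1 := pow_le_one₀ h0 h1
      linarith
    · intro j _
      have : 0 ≤ t ^ (a + j + 1) := pow_nonneg h0 _
      linarith
  have h3 : 0 ≤ ∏ j ∈ Finset.range a, (1 - t ^ (j + 1)) := PiProd_nonneg h0 h1 a
  nlinarith [mul_le_of_le_one_right h3 h2]

lemma geom_le_aux {t : ℝ} (h0 : 0 ≤ t) (h1 : t < 1) (n : ℕ) :
    ∑ j ∈ Finset.range n, t ^ j ≤ 1 / (1 - t) := by
  rw [le_div_iff₀ (by linarith)]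
  have := geom_sum_mul t n
  have h5 : 0 ≤ t ^ n := pow_nonneg h0 _
  nlinarith

lemma one_sub_sum_le_PiProd {t : ℝ} (h0 : 0 ≤ t) (h1 : t ≤ 1) (n : ℕ) :
    1 - ∑ j ∈ Finset.range n, t ^ (j + 1) ≤ PiProd n t := by
  induction n with
  | zero => simp [PiProd]
  | succ n ih =>
    have h2 : t ^ (n + 1) ≤ 1 := pow_le_one₀ h0 h1
    have h2' : 0 ≤ t ^ (n + 1) := pow_nonneg h0 _
    have h3 : 0 ≤ ∑ j ∈ Finset.range n, t ^ (j + 1) := by positivity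
    have h4 : PiProd (n + 1) t = PiProd n t * (1 - t ^ (n + 1)) := by
      unfold PiProd; rw [Finset.prod_range_succ]
    rw [h4, Finset.sum_range_succ]
    nlinarith

lemma PiProd_ge_two_thirds {t : ℝ} (h0 : 0 ≤ t) (h1 : t ≤ 1 / 4) (n : ℕ) :
    2 / 3 ≤ PiProd n t := by
  have h1' : t ≤ 1 := by linarith
  have hgeo : ∑ j ∈ Finset.range n, t ^ j ≤ 1 / (1 - t) := geom_le_aux h0 (by linarith) n
  have hsum : ∑ j ∈ Finset.range n, t ^ (j + 1) ≤ 1 / 3 := by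
    have he : ∑ j ∈ Finset.range n, t ^ (j + 1) = t * ∑ j ∈ Finset.range n, t ^ j := by
      rw [Finset.mul_sum]
      apply Finset.sum_congr rfl
      intro j _; ring
    rw [he]
    have h6 : t * ∑ j ∈ Finset.range n, t ^ j ≤ t * (1 / (1 - t)) :=
      mul_le_mul_of_nonneg_left hgeo h0
    have h7 : t * (1 / (1 - t)) ≤ 1 / 3 := by
      rw [mul_one_div, div_le_div_iff₀ (by linarith) (by norm_num)]
      linarith
    linarith
  have := one_sub_sum_le_PiProd h0 h1' n
  linarith

lemma key_poly_aux {q : ℝ} (h0 : 0 < q) (h2 : q ≤ 1/2) :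
    q * ((1 - q^2) + 9/4*(1-q)*q^2)^2 < (1 - q^2)^2 := by
  have hq1 : q < 1 := by linarith
  have h3 : (0:ℝ) ≤ 1/2 - q := by linarith
  have e1 : q * ((1 - q^2) + 9/4*(1-q)*q^2)^2 = (1-q)^2 * (q * (1 + q + 9/4*q^2)^2) := by ring
  have e2 : (1 - q^2)^2 = (1-q)^2 * (1+q)^2 := by ring
  rw [e1, e2]
  have hlt : q * (1 + q + 9/4*q^2)^2 < (1+q)^2 := by
    nlinarith [mul_nonneg (mul_nonneg h3 h0.le) h0.le,
      mul_nonneg (mul_nonneg (mul_nonneg h3 h0.le) h0.le) h0.le,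
      mul_nonneg (mul_nonneg (mul_nonneg (mul_nonneg h3 h0.le) h0.le) h0.le) h0.le,
      mul_nonneg h3 h0.le, sq_nonneg q]
  have hpos : (0:ℝ) < (1-q)^2 := by nlinarith
  exact mul_lt_mul_of_pos_left hlt hpos

lemma sqrt_helper_aux {A r t : ℝ} (h0 : 0 ≤ r) (h1 : r * r = t)
    (h2 : A ^ 2 * t < 1) (h3 : 1 ≤ A) : A * r < 1 := by
  nlinarith [sq_nonneg (A * r - 1)]

set_option maxHeartbeats 2000000 in
theorem R_lt_q_pow (p : ℕ) (hp : p.Prime) (q : ℝ) (hq : q = 1 / p)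
    (n μ : ℕ) (hn : 1 ≤ n) (hμ : 1 ≤ μ) (k s : ℕ) (hk : k = n / 2)
    (hs : s = (μ - 1) / 2) (R : ℝ)
    (hR : R = q ^ (s + 1) * ∑ j ∈ Finset.range k,
      (q ^ μ * (1 - q ^ n) - q ^ (2 * s + 2) * (1 - q ^ (2 * j + 1))) * q ^ (2 * j) *
        PiProd (2 * j) q * PiProd (j + s) (q ^ 2) /
          (PiProd j (q ^ 2) ^ 2 * PiProd s (q ^ 2))) :
    R < q ^ ((3 * (μ : ℝ)) / 2) := by
  have hp2 : 2 ≤ p := hp.two_le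
  have hp2' : (2 : ℝ) ≤ p := by exact_mod_cast hp2
  have hq0 : 0 < q := by rw [hq]; positivity
  have hqh : q ≤ 1 / 2 := by
    rw [hq, div_le_div_iff₀ (by linarith) (by norm_num)]; linarith
  have hq1 : q < 1 := by linarith
  have hrpos : 0 < q ^ ((3 * (μ : ℝ)) / 2) := Real.rpow_pos_of_pos hq0 _
  set x : ℝ := q ^ 2 with hxq
  have hx0 : 0 ≤ x := by positivity
  have hx4 : x ≤ 1 / 4 := by rw [hxq]; nlinarith
  have hx1 : x < 1 := by linarith
  obtain ⟨ε, hε, hμε⟩ : ∃ ε : ℕ, ε ≤ 1 ∧ μ = 2 * s + 1 + ε := ⟨μ - (2 * s + 1), by omega, by omega⟩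
  have hqn : q ^ n ≤ q := by
    calc q ^ n ≤ q ^ 1 := pow_le_pow_of_le_one hq0.le hq1.le hn
    _ = q := pow_one q
  have hqμ : (0 : ℝ) < q ^ (μ + ε) := by positivity
  -- coefficient bounds
  have hC : ∀ j : ℕ, j < k →
      0 ≤ q ^ μ * (1 - q ^ n) - q ^ (2 * s + 2) * (1 - q ^ (2 * j + 1)) ∧
      q ^ μ * (1 - q ^ n) - q ^ (2 * s + 2) * (1 - q ^ (2 * j + 1)) ≤ q ^ (μ + ε) := by
    intro j hj
    have hj2 : 2 * j + 2 ≤ n := by omega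
    have e1 : q ^ (2 * j + 2) ≤ q := by
      calc q ^ (2 * j + 2) ≤ q ^ 1 := pow_le_pow_of_le_one hq0.le hq1.le (by omega)
      _ = q := pow_one q
    have e1' : (0:ℝ) ≤ q ^ (2 * j + 2) := by positivity
    have hqm : (0:ℝ) < q ^ μ := by positivity
    interval_cases ε
    · -- μ = 2s+1
      have h1 : 2 * s + 2 = μ + 1 := by omega
      have he : q ^ μ * (1 - q ^ n) - q ^ (2 * s + 2) * (1 - q ^ (2 * j + 1))
          = q ^ μ * (1 - q ^ n - q + q ^ (2 * j + 2)) := by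
        rw [h1, pow_succ]; ring
      rw [he]
      have hi1 : 0 ≤ 1 - q ^ n - q + q ^ (2 * j + 2) := by linarith
      have hi2 : 1 - q ^ n - q + q ^ (2 * j + 2) ≤ 1 := by
        have : (0:ℝ) ≤ q ^ n := by positivity
        linarith
      constructor
      · positivity
      · simpa using mul_le_mul_of_nonneg_left hi2 hqm.le
    · -- μ = 2s+2
      have h1 : 2 * s + 2 = μ := by omega
      have he : q ^ μ * (1 - q ^ n) - q ^ (2 * s + 2) * (1 - q ^ (2 * j + 1))
          = q ^ μ * (q ^ (2 * j + 1) - q ^ n) := by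
        rw [h1]; ring
      rw [he]
      have hi1 : q ^ n ≤ q ^ (2 * j + 1) := pow_le_pow_of_le_one hq0.le hq1.le (by omega)
      have hi2 : q ^ (2 * j + 1) - q ^ n ≤ q := by
        have e2 : q ^ (2 * j + 1) ≤ q := by
          calc q ^ (2 * j + 1) ≤ q ^ 1 := pow_le_pow_of_le_one hq0.le hq1.le (by omega)
          _ = q := pow_one q
        have : (0:ℝ) ≤ q ^ n := by positivity
        linarith
      constructor
      · have : 0 ≤ q ^ (2 * j + 1) - q ^ n := by linarith
        positivity
      · rw [pow_add, pow_one]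
        exact mul_le_mul_of_nonneg_left hi2 hqm.le
  have hPs : 0 < PiProd s x := PiProd_pos hx0 hx1 s
  -- handle k = 0
  rcases Nat.eq_zero_or_pos k with hk0 | hkpos
  · rw [hR, hk0]; simp [hrpos]
  obtain ⟨m, rfl⟩ : ∃ m, k = m + 1 := ⟨k - 1, by omega⟩
  -- term bound for j ≥ 1
  have hterm : ∀ i ∈ Finset.range m,
      (q ^ μ * (1 - q ^ n) - q ^ (2 * s + 2) * (1 - q ^ (2 * (i + 1) + 1))) * q ^ (2 * (i + 1)) *
        PiProd (2 * (i + 1)) q * PiProd ((i + 1) + s) x /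
          (PiProd (i + 1) x ^ 2 * PiProd s x)
      ≤ 9 / 4 * (1 - q) * q ^ (μ + ε) * x ^ (i + 1) := by
    intro i hi
    have hik : i + 1 < m + 1 := by simp at hi; omega
    obtain ⟨hC0, hC1⟩ := hC (i + 1) hik
    have hb3 : PiProd (2 * (i + 1)) q ≤ 1 - q := by
      have := PiProd_anti hq0.le hq1.le (show 1 ≤ 2 * (i + 1) by omega)
      simpa [PiProd] using this
    have hb3' : 0 ≤ PiProd (2 * (i + 1)) q := PiProd_nonneg hq0.le hq1.le _
    have hb4 : PiProd ((i + 1) + s) x ≤ PiProd s x := PiProd_anti hx0 hx1.le (by omega)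
    have hb4' : 0 ≤ PiProd ((i + 1) + s) x := PiProd_nonneg hx0 hx1.le _
    have hq2j : (0:ℝ) ≤ q ^ (2 * (i + 1)) := by positivity
    have hden : (2/3 : ℝ) ^ 2 * PiProd s x ≤ PiProd (i + 1) x ^ 2 * PiProd s x := by
      apply mul_le_mul_of_nonneg_right _ hPs.le
      exact pow_le_pow_left₀ (by norm_num) (PiProd_ge_two_thirds hx0 hx4 _) 2
    have hxe : q ^ (2 * (i + 1)) = x ^ (i + 1) := by rw [hxq, ← pow_mul]
    have hnum : (q ^ μ * (1 - q ^ n) - q ^ (2 * s + 2) * (1 - q ^ (2 * (i + 1) + 1))) *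
          q ^ (2 * (i + 1)) * PiProd (2 * (i + 1)) q * PiProd ((i + 1) + s) x
        ≤ q ^ (μ + ε) * q ^ (2 * (i + 1)) * (1 - q) * PiProd s x := by
      have s1 : (q ^ μ * (1 - q ^ n) - q ^ (2 * s + 2) * (1 - q ^ (2 * (i + 1) + 1))) *
            q ^ (2 * (i + 1)) ≤ q ^ (μ + ε) * q ^ (2 * (i + 1)) :=
        mul_le_mul_of_nonneg_right hC1 hq2j
      have s2 : (q ^ μ * (1 - q ^ n) - q ^ (2 * s + 2) * (1 - q ^ (2 * (i + 1) + 1))) *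
            q ^ (2 * (i + 1)) * PiProd (2 * (i + 1)) q ≤ q ^ (μ + ε) * q ^ (2 * (i + 1)) * (1 - q) :=
        mul_le_mul s1 hb3 hb3' (by positivity)
      exact mul_le_mul s2 hb4 hb4' (mul_nonneg (mul_nonneg hqμ.le hq2j) (by linarith))
    calc (q ^ μ * (1 - q ^ n) - q ^ (2 * s + 2) * (1 - q ^ (2 * (i + 1) + 1))) * q ^ (2 * (i + 1)) *
        PiProd (2 * (i + 1)) q * PiProd ((i + 1) + s) x /
          (PiProd (i + 1) x ^ 2 * PiProd s x)
        ≤ (q ^ (μ + ε) * q ^ (2 * (i + 1)) * (1 - q) * PiProd s x) / ((2/3 : ℝ) ^ 2 * PiProd s x) := by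
          apply div_le_div₀ (mul_nonneg (mul_nonneg (mul_nonneg hqμ.le hq2j) (by linarith)) hPs.le) hnum (by positivity) hden
      _ = 9 / 4 * (1 - q) * q ^ (μ + ε) * x ^ (i + 1) := by
          rw [hxe]; field_simp; ring
  -- term bound for j = 0
  have hF0 : (q ^ μ * (1 - q ^ n) - q ^ (2 * s + 2) * (1 - q ^ (2 * 0 + 1))) * q ^ (2 * 0) *
        PiProd (2 * 0) q * PiProd (0 + s) x / (PiProd 0 x ^ 2 * PiProd s x)
      ≤ q ^ (μ + ε) := by
    have h0 : (q ^ μ * (1 - q ^ n) - q ^ (2 * s + 2) * (1 - q ^ (2 * 0 + 1))) * q ^ (2 * 0) *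
        PiProd (2 * 0) q * PiProd (0 + s) x / (PiProd 0 x ^ 2 * PiProd s x)
        = q ^ μ * (1 - q ^ n) - q ^ (2 * s + 2) * (1 - q ^ (2 * 0 + 1)) := by
      have e0 : PiProd 0 x = 1 := by simp [PiProd]
      have e1 : PiProd (2 * 0) q = 1 := by simp [PiProd]
      rw [e1, e0]
      simp only [Nat.mul_zero, Nat.zero_add, pow_zero, mul_one, one_pow, one_mul,
        mul_div_assoc, div_self hPs.ne']
    rw [h0]
    exact (hC 0 (by omega)).2
  -- sum bound
  have hgeo : ∑ i ∈ Finset.range m, x ^ i ≤ 1 / (1 - x) := geom_le_aux hx0 hx1 m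
  have hsum : (∑ j ∈ Finset.range (m + 1),
      (q ^ μ * (1 - q ^ n) - q ^ (2 * s + 2) * (1 - q ^ (2 * j + 1))) * q ^ (2 * j) *
        PiProd (2 * j) q * PiProd (j + s) x /
          (PiProd j x ^ 2 * PiProd s x))
      ≤ q ^ (μ + ε) * (1 + 9 / 4 * (1 - q) * (x / (1 - x))) := by
    rw [Finset.sum_range_succ']
    have h1 : (∑ i ∈ Finset.range m,
        (q ^ μ * (1 - q ^ n) - q ^ (2 * s + 2) * (1 - q ^ (2 * (i + 1) + 1))) * q ^ (2 * (i + 1)) *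
          PiProd (2 * (i + 1)) q * PiProd ((i + 1) + s) x /
            (PiProd (i + 1) x ^ 2 * PiProd s x))
        ≤ ∑ i ∈ Finset.range m, 9 / 4 * (1 - q) * q ^ (μ + ε) * x ^ (i + 1) :=
      Finset.sum_le_sum hterm
    have h2 : ∑ i ∈ Finset.range m, 9 / 4 * (1 - q) * q ^ (μ + ε) * x ^ (i + 1)
        = 9 / 4 * (1 - q) * q ^ (μ + ε) * x * ∑ i ∈ Finset.range m, x ^ i := by
      rw [Finset.mul_sum]
      apply Finset.sum_congr rfl
      intro i _; ring
    have h3 : 9 / 4 * (1 - q) * q ^ (μ + ε) * x * ∑ i ∈ Finset.range m, x ^ i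
        ≤ 9 / 4 * (1 - q) * q ^ (μ + ε) * x * (1 / (1 - x)) := by
      apply mul_le_mul_of_nonneg_left hgeo
      have : (0:ℝ) ≤ 1 - q := by linarith
      positivity
    have h4 : 9 / 4 * (1 - q) * q ^ (μ + ε) * x * (1 / (1 - x))
        = q ^ (μ + ε) * (9 / 4 * (1 - q) * (x / (1 - x))) := by ring
    linarith
  set A : ℝ := 1 + 9 / 4 * (1 - q) * (x / (1 - x)) with hA
  have hA1 : 1 ≤ A := by
    have : (0:ℝ) ≤ 9 / 4 * (1 - q) * (x / (1 - x)) := by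
      have h5 : (0:ℝ) ≤ 1 - q := by linarith
      have h6 : (0:ℝ) < 1 - x := by linarith
      positivity
    rw [hA]
    linarith
  have hRle : R ≤ q ^ (s + 1 + (μ + ε)) * A := by
    rw [hR, pow_add q (s + 1) (μ + ε), mul_assoc]
    exact mul_le_mul_of_nonneg_left hsum (by positivity : (0:ℝ) ≤ q ^ (s + 1))
  -- final rpow comparison
  have hkey : A * Real.sqrt q < 1 := by
    have hAq : A ^ 2 * q < 1 := by
      have h6 : (0:ℝ) < 1 - x := by linarith
      have hkp := key_poly_aux hq0 hqh
      have hAe : A = ((1 - q ^ 2) + 9 / 4 * (1 - q) * q ^ 2) / (1 - q ^ 2) := by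
        have h6' : (1:ℝ) - q ^ 2 ≠ 0 := by rw [← hxq]; linarith
        rw [hA, hxq]; field_simp
      have h8 : q ^ 2 < 1 := pow_lt_one₀ hq0.le hq1 two_ne_zero
      have h7 : (0:ℝ) < (1 - q ^ 2) ^ 2 := pow_pos (by linarith) 2
      rw [hAe, div_pow, div_mul_eq_mul_div, div_lt_one h7]
      linarith [hkp]
    exact sqrt_helper_aux (Real.sqrt_nonneg q) (Real.mul_self_sqrt hq0.le) hAq hA1
  have hy : (0:ℝ) < q ^ ((1 + (ε:ℝ)) / 2) := Real.rpow_pos_of_pos hq0 _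
  have hyle : q ^ ((1 + (ε:ℝ)) / 2) ≤ Real.sqrt q := by
    rw [Real.sqrt_eq_rpow]
    apply Real.rpow_le_rpow_of_exponent_ge hq0 hq1.le
    have : (0:ℝ) ≤ (ε:ℝ) := Nat.cast_nonneg ε
    linarith
  have hAy : A * q ^ ((1 + (ε:ℝ)) / 2) < 1 := by
    have : A * q ^ ((1 + (ε:ℝ)) / 2) ≤ A * Real.sqrt q :=
      mul_le_mul_of_nonneg_left hyle (by linarith)
    exact this.trans_lt hkey
  have hexp : (3 * (μ:ℝ)) / 2 = ((s + 1 + (μ + ε) : ℕ) : ℝ) + (-((1 + (ε:ℝ)) / 2)) := by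
    have h2N : 2 * (s + 1 + (μ + ε)) = 3 * μ + 1 + ε := by omega
    have := congrArg (fun t : ℕ => (t : ℝ)) h2N
    push_cast at this
    push_cast
    linarith
  rw [hexp, Real.rpow_add hq0, Real.rpow_natCast, Real.rpow_neg hq0.le]
  calc R ≤ q ^ (s + 1 + (μ + ε)) * A := hRle
    _ < q ^ (s + 1 + (μ + ε)) * (q ^ ((1 + (ε:ℝ)) / 2))⁻¹ := by
        apply mul_lt_mul_of_pos_left _ (by positivity : (0:ℝ) < q ^ (s + 1 + (μ + ε)))
        have h9 : A < 1 / q ^ ((1 + (ε:ℝ)) / 2) := (lt_div_iff₀ hy).mpr (by linarith [hAy])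
        simpa [one_div] using h9
end
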